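/- arXiv:1902.02818 — 3 statements merged into one kernel-verified Lean document; each statement's English description precedes it below -/
import Mathlib

section
/- Let α ∈ (0,1), λ ∈ ℂ, u₀ ∈ ℂ, and g ∈ L²(0,1). Define u(x) = u₀ E_{α+1}(λ x^{α+1}) − ∫₀ˣ (x−s)^α E_{α+1,α+1}(λ (x−s)^{α+1}) g(s) ds for x ∈ [0,1]. Then u is continuous on [0,1], u(0) = u₀, and u satisfies the integral equation u(x) = u₀ + λ (I^{α+1}u)(x) − (I^{α+1}g)(x) for every x ∈ [0,1]. -/
open MeasureTheory Set Filter Topology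

/-- Riemann–Liouville fractional integral `I^γ f` on `(0,1)` (complex-valued),
with the convention `I⁰ f = f`. -/
noncomputable def fracInt (γ : ℝ) (f : ℝ → ℂ) (x : ℝ) : ℂ :=
  if γ = 0 then f x
  else ((Real.Gamma γ)⁻¹ : ℝ) • ∫ p in (0:ℝ)..x, (((x - p) ^ (γ - 1) : ℝ) : ℂ) * f p

/-- `f` is square integrable (and a.e. strongly measurable) on `(0,1)`: `f ∈ L²(0,1)`. -/
def SqIntOn (f : ℝ → ℂ) : Prop :=
  MeasureTheory.AEStronglyMeasurable f (MeasureTheory.volume.restrict (Set.Ioc (0:ℝ) 1)) ∧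
  MeasureTheory.IntegrableOn (fun x => ‖f x‖ ^ 2) (Set.Ioc (0:ℝ) 1)

/-- `(u, w)` lies in the graph of `A = (d/dx) D^α`:  `u` is absolutely continuous on `[0,1]`
with `u' = I^α w` a.e., `u(1) = 0`, and `w ∈ L²(0,1)`; then `A u = w`. -/
def InGraphA (α : ℝ) (u w : ℝ → ℂ) : Prop :=
  u 1 = 0 ∧ SqIntOn w ∧
  IntervalIntegrable (fracInt α w) MeasureTheory.volume 0 1 ∧
  ∀ x ∈ Set.Icc (0:ℝ) 1, u x = u 0 + ∫ t in (0:ℝ)..x, fracInt α w t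

/-- Square of the `L²(0,1)` norm. -/
noncomputable def L2normSq (f : ℝ → ℂ) : ℝ := ∫ x in (0:ℝ)..1, ‖f x‖ ^ 2

/-- Square of the Gagliardo seminorm of order `s` on `(0,1)`. -/
noncomputable def sobSeminormSq (s : ℝ) (u : ℝ → ℂ) : ℝ :=
  ∫ x in (0:ℝ)..1, ∫ y in (0:ℝ)..1, ‖u x - u y‖ ^ 2 / |x - y| ^ (1 + 2 * s)

/-- Square of the fractional Sobolev `H^s(0,1)` norm `N_s(u)`. -/
noncomputable def sobNormSq (s : ℝ) (u : ℝ → ℂ) : ℝ :=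
  L2normSq u + sobSeminormSq s u

/-- The two-parameter Mittag-Leffler function E_{nu, mu}(z). -/
noncomputable def mittagLeffler (ν μ : ℝ) (z : ℂ) : ℂ :=
  ∑' n : ℕ, z ^ n / ((Real.Gamma (μ + ν * n) : ℝ) : ℂ)




section aux

lemma cont_rpow_const {q : ℝ} (hq : 0 ≤ q) : Continuous (fun x : ℝ => x ^ q) :=
  continuous_iff_continuousAt.2 fun x => Real.continuousAt_rpow_const x q (Or.inr hq)

noncomputable def trc (x : ℝ) : ℝ := min |x| 1

lemma trc_nonneg (x : ℝ) : 0 ≤ trc x := le_min (abs_nonneg x) zero_le_one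
lemma trc_le_one (x : ℝ) : trc x ≤ 1 := min_le_right _ _
lemma trc_eq {x : ℝ} (h0 : 0 ≤ x) (h1 : x ≤ 1) : trc x = x := by
  rw [trc, abs_of_nonneg h0]; exact min_eq_left h1
lemma cont_trc : Continuous trc := (continuous_abs).min continuous_const

lemma summable_ml {M c : ℝ} (hM : 0 ≤ M) (hc : 1 ≤ c) {d : ℝ} (hd : 0 < d) :
    Summable (fun n : ℕ => M ^ n / Real.Gamma (c * n + d)) := by
  rw [← summable_nat_add_iff 2]
  have h1 : Summable (fun n : ℕ => M ^ 2 * (M ^ n / (Nat.factorial n : ℝ))) :=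
    (Real.summable_pow_div_factorial M).mul_left (M ^ 2)
  apply Summable.of_nonneg_of_le (fun n => by positivity) (fun n => ?_) h1
  push_cast
  have hΓpos : 0 < Real.Gamma (c * ((n:ℝ) + 2) + d) := Real.Gamma_pos_of_pos (by nlinarith)
  have hfacpos : (0:ℝ) < Nat.factorial n := by exact_mod_cast Nat.factorial_pos n
  have hfac : (Nat.factorial n : ℝ) ≤ Real.Gamma (c * ((n:ℝ)+2) + d) := by
    have h2 : Real.Gamma ((n:ℝ) + 2) = Nat.factorial (n+1) := by
      have := Real.Gamma_nat_eq_factorial (n+1)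
      push_cast at this ⊢; convert this using 2; ring
    calc (Nat.factorial n : ℝ) ≤ Nat.factorial (n+1) := by
          exact_mod_cast Nat.factorial_le (Nat.le_succ n)
      _ = Real.Gamma ((n:ℝ) + 2) := h2.symm
      _ ≤ Real.Gamma (c * ((n:ℝ)+2) + d) := by
          apply Real.Gamma_strictMonoOn_Ici.monotoneOn (Set.mem_Ici.2 (by linarith))
            (Set.mem_Ici.2 (by nlinarith)) (by nlinarith)
  rw [div_le_iff₀ hΓpos]
  calc M ^ (n+2) = (M^2 * (M^n / (Nat.factorial n : ℝ))) * (Nat.factorial n : ℝ) := by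
        field_simp; ring
    _ ≤ _ := mul_le_mul_of_nonneg_left hfac (by positivity)

end aux

section ser
variable {c d : ℝ} (lam : ℂ)

noncomputable def mlF (c : ℝ) (lam : ℂ) (d : ℝ) (x : ℝ) : ℂ :=
  ∑' n : ℕ, lam ^ n * (((trc x) ^ (c * n + (d - 1)) : ℝ) : ℂ) / ((Real.Gamma (c * n + d) : ℝ) : ℂ)

noncomputable def tailSum (c : ℝ) (lam : ℂ) (d : ℝ) (y : ℝ) : ℂ :=
  ∑' n : ℕ, lam ^ n * ((y ^ (c * n + (c + d - 1)) : ℝ) : ℂ) / ((Real.Gamma (c * n + (c + d)) : ℝ) : ℂ)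

lemma mlF_term_norm_le (hc : 1 ≤ c) (hd : 1 ≤ d) (x : ℝ) (n : ℕ) :
    ‖lam ^ n * (((trc x) ^ (c * n + (d - 1)) : ℝ) : ℂ) / ((Real.Gamma (c * n + d) : ℝ) : ℂ)‖
      ≤ ‖lam‖ ^ n / Real.Gamma (c * n + d) := by
  have hΓ : 0 < Real.Gamma (c * n + d) := Real.Gamma_pos_of_pos (by positivity)
  rw [norm_div, norm_mul, norm_pow, Complex.norm_real, Complex.norm_real,
    Real.norm_of_nonneg hΓ.le, Real.norm_of_nonneg (Real.rpow_nonneg (trc_nonneg x) _)]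
  have he : trc x ^ (c * n + (d - 1)) ≤ 1 :=
    Real.rpow_le_one (trc_nonneg x) (trc_le_one x) (by nlinarith [Nat.cast_nonneg (α := ℝ) n])
  calc ‖lam‖ ^ n * trc x ^ (c * n + (d - 1)) / Real.Gamma (c * n + d)
      ≤ ‖lam‖ ^ n * 1 / Real.Gamma (c * n + d) := by gcongr
    _ = ‖lam‖ ^ n / Real.Gamma (c * n + d) := by rw [mul_one]

lemma summable_mlF (hc : 1 ≤ c) (hd : 1 ≤ d) (x : ℝ) :
    Summable (fun n : ℕ =>
      lam ^ n * (((trc x) ^ (c * n + (d - 1)) : ℝ) : ℂ) / ((Real.Gamma (c * n + d) : ℝ) : ℂ)) := by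
  apply Summable.of_norm
  apply Summable.of_nonneg_of_le (fun n => norm_nonneg _) (mlF_term_norm_le lam hc hd x)
  exact summable_ml (norm_nonneg lam) hc (by linarith)

lemma cont_mlF (hc : 1 ≤ c) (hd : 1 ≤ d) : Continuous (mlF c lam d) := by
  apply continuous_tsum (u := fun n : ℕ => ‖lam‖ ^ n / Real.Gamma (c * n + d))
  · intro n
    have he : (0:ℝ) ≤ c * n + (d - 1) := by nlinarith [Nat.cast_nonneg (α := ℝ) n]
    refine Continuous.div_const (continuous_const.mul ?_) _
    exact Complex.continuous_ofReal.comp ((cont_rpow_const he).comp cont_trc)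
  · exact summable_ml (norm_nonneg lam) hc (by linarith)
  · exact fun n x => mlF_term_norm_le lam hc hd x n

lemma norm_mlF_le (hc : 1 ≤ c) (hd : 1 ≤ d) (x : ℝ) :
    ‖mlF c lam d x‖ ≤ ∑' n : ℕ, ‖lam‖ ^ n / Real.Gamma (c * n + d) :=
  (norm_tsum_le_tsum_norm ((summable_mlF lam hc hd x).norm)).trans
    (Summable.tsum_le_tsum (mlF_term_norm_le lam hc hd x) (summable_mlF lam hc hd x).norm
      (summable_ml (norm_nonneg lam) hc (by linarith)))

lemma mlF_shift (hc : 1 ≤ c) (hd : 1 ≤ d) {y : ℝ} (h0 : 0 ≤ y) (h1 : y ≤ 1) :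
    mlF c lam d y = ((y ^ (d - 1) : ℝ) : ℂ) / ((Real.Gamma d : ℝ) : ℂ) + lam * tailSum c lam d y := by
  rw [mlF, Summable.tsum_eq_zero_add (summable_mlF lam hc hd y)]
  congr 1
  · simp [trc_eq h0 h1]
  · rw [tailSum, ← tsum_mul_left]
    apply tsum_congr; intro n
    rw [trc_eq h0 h1, pow_succ, Nat.cast_succ]
    rw [show c * ((n:ℝ)+1) + (d-1) = c * n + (c + d - 1) by ring,
        show c * ((n:ℝ)+1) + d = c * n + (c + d) by ring]
    push_cast
    ring

lemma mlF_one_eq_ml (hc : 1 ≤ c) {x : ℝ} (h0 : 0 ≤ x) (h1 : x ≤ 1) :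
    mittagLeffler c 1 (lam * ((x ^ c : ℝ) : ℂ)) = mlF c lam 1 x := by
  rw [mittagLeffler, mlF]
  apply tsum_congr; intro n
  rw [trc_eq h0 h1, mul_pow, show (1:ℝ) + c * n = c * n + 1 by ring, sub_self,
    ← Complex.ofReal_pow, ← Real.rpow_natCast (x ^ c) n, ← Real.rpow_mul h0, mul_comm c (n:ℝ)]
  ring

lemma mlF_c_eq_ml (hc : 1 < c) {x : ℝ} (h0 : 0 ≤ x) (h1 : x ≤ 1) :
    ((x ^ (c - 1) : ℝ) : ℂ) * mittagLeffler c c (lam * ((x ^ c : ℝ) : ℂ)) = mlF c lam c x := by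
  rw [mittagLeffler, mlF, ← tsum_mul_left]
  apply tsum_congr; intro n
  rw [trc_eq h0 h1, mul_pow, show c + c * n = c * n + c by ring,
    ← Complex.ofReal_pow, ← Real.rpow_natCast (x ^ c) n, ← Real.rpow_mul h0, mul_comm c (n:ℝ)]
  rcases eq_or_lt_of_le h0 with rfl | hx
  · rw [Real.zero_rpow (show c - 1 ≠ 0 by intro h; linarith),
      Real.zero_rpow (show (n:ℝ) * c + (c - 1) ≠ 0 by
        have := Nat.cast_nonneg (α := ℝ) n; intro h; nlinarith)]
    simp
  · rw [show (n:ℝ) * c + (c - 1) = (c - 1) + (n:ℝ) * c by ring, Real.rpow_add hx]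
    push_cast
    ring

end ser


lemma betaC {a b : ℝ} (ha : 0 < a) (hb : 0 < b) (hab : 1 < a + b) {x : ℝ} (h0 : 0 ≤ x) :
    ∫ p in (0:ℝ)..x, (((x - p) ^ (a - 1) : ℝ) : ℂ) * ((p ^ (b - 1) : ℝ) : ℂ)
      = ((Real.Gamma a * Real.Gamma b / Real.Gamma (a + b) * x ^ (a + b - 1) : ℝ) : ℂ) := by
  rcases eq_or_lt_of_le h0 with rfl | hx
  · rw [intervalIntegral.integral_same, Real.zero_rpow (by intro h; linarith), mul_zero,
      Complex.ofReal_zero]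
  · have h1 := Complex.betaIntegral_scaled (b:ℂ) (a:ℂ) hx
    have h2 := Complex.Gamma_mul_Gamma_eq_betaIntegral
      (show 0 < (b:ℂ).re by simpa using hb) (show 0 < (a:ℂ).re by simpa using ha)
    have hΓ : Complex.Gamma ((b:ℂ) + a) ≠ 0 := by
      rw [show ((b:ℂ) + a) = ((b + a : ℝ) : ℂ) by push_cast; ring, Complex.Gamma_ofReal]
      exact_mod_cast (Real.Gamma_pos_of_pos (by linarith)).ne'
    have hbeta : Complex.betaIntegral (b:ℂ) (a:ℂ)
        = Complex.Gamma (b:ℂ) * Complex.Gamma (a:ℂ) / Complex.Gamma ((b:ℂ) + a) := by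
      field_simp [h2]
      rw [h2]; ring
    -- convert LHS to the scaled beta integral
    have hcongr : ∫ p in (0:ℝ)..x, (((x - p) ^ (a - 1) : ℝ) : ℂ) * ((p ^ (b - 1) : ℝ) : ℂ)
        = ∫ p in (0:ℝ)..x, (p : ℂ) ^ ((b:ℂ) - 1) * ((x : ℂ) - p) ^ ((a:ℂ) - 1) := by
      rw [intervalIntegral.integral_of_le h0, intervalIntegral.integral_of_le h0]
      apply setIntegral_congr_fun measurableSet_Ioc
      intro p hp
      dsimp only
      rw [Complex.ofReal_cpow (by linarith [hp.2] : (0:ℝ) ≤ x - p),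
        Complex.ofReal_cpow hp.1.le]
      push_cast
      ring
    rw [hcongr, h1, hbeta]
    rw [Complex.Gamma_ofReal, Complex.Gamma_ofReal,
      show ((b:ℂ) + a - 1) = ((a + b - 1 : ℝ) : ℂ) by push_cast; ring,
      show ((b:ℂ) + a) = ((a + b : ℝ) : ℂ) by push_cast; ring, Complex.Gamma_ofReal,
      ← Complex.ofReal_cpow h0]
    push_cast
    ring

section frac
variable {c d : ℝ} (lam : ℂ)

lemma frac_mlF (hc : 1 < c) (hc2 : c ≤ 2) (hd : 1 ≤ d) {y : ℝ} (h0 : 0 ≤ y) (h1 : y ≤ 1) :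
    ∫ t in (0:ℝ)..y, (((y - t) ^ (c - 1) : ℝ) : ℂ) * mlF c lam d t
      = ((Real.Gamma c : ℝ) : ℂ) * tailSum c lam d y := by
  have hM : (0:ℝ) ≤ ‖lam‖ := norm_nonneg lam
  -- the n-th integrand
  set H : ℕ → ℝ → ℂ := fun n t =>
    (((y - t) ^ (c - 1) : ℝ) : ℂ) * ((t ^ (c * n + (d - 1)) : ℝ) : ℂ) *
      (lam ^ n / ((Real.Gamma (c * n + d) : ℝ) : ℂ)) with hH
  have hΓpos : ∀ n : ℕ, (0:ℝ) < Real.Gamma (c * n + d) := fun n =>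
    Real.Gamma_pos_of_pos (by nlinarith [Nat.cast_nonneg (α := ℝ) n])
  have hΓcd : ∀ n : ℕ, (0:ℝ) < Real.Gamma (c * n + (c + d)) := fun n =>
    Real.Gamma_pos_of_pos (by nlinarith [Nat.cast_nonneg (α := ℝ) n])
  have hcont : ∀ n : ℕ, Continuous (H n) := by
    intro n
    apply Continuous.mul (Continuous.mul ?_ ?_) continuous_const
    · exact Complex.continuous_ofReal.comp
        ((cont_rpow_const (by linarith)).comp (continuous_const.sub continuous_id))
    · exact Complex.continuous_ofReal.comp
        (cont_rpow_const (by nlinarith [Nat.cast_nonneg (α := ℝ) n]))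
  have hint : ∀ n : ℕ, IntegrableOn (H n) (Ioc 0 y) volume := fun n =>
    (hcont n).integrableOn_Ioc
  have hbd : ∀ n : ℕ, ∀ t ∈ Ioc (0:ℝ) y, ‖H n t‖ ≤ ‖lam‖ ^ n / Real.Gamma (c * n + d) := by
    intro n t ht
    rw [hH]
    simp only [norm_mul, norm_div, Complex.norm_real, norm_pow]
    rw [Real.norm_of_nonneg (hΓpos n).le,
      Real.norm_of_nonneg (Real.rpow_nonneg (by linarith [ht.2] : (0:ℝ) ≤ y - t) _),
      Real.norm_of_nonneg (Real.rpow_nonneg ht.1.le _)]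
    have e1 : (y - t) ^ (c - 1) ≤ 1 :=
      Real.rpow_le_one (by linarith [ht.2]) (by linarith [ht.1]) (by linarith)
    have e2 : t ^ (c * n + (d - 1)) ≤ 1 :=
      Real.rpow_le_one ht.1.le (by linarith [ht.2]) (by nlinarith [Nat.cast_nonneg (α := ℝ) n])
    have e3 : (0:ℝ) ≤ (y - t) ^ (c - 1) := Real.rpow_nonneg (by linarith [ht.2]) _
    have e4 : (0:ℝ) ≤ t ^ (c * n + (d - 1)) := Real.rpow_nonneg ht.1.le _
    calc (y-t) ^ (c-1) * t ^ (c * n + (d-1)) * (‖lam‖^n / Real.Gamma (c * n + d))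
        ≤ 1 * 1 * (‖lam‖^n / Real.Gamma (c * n + d)) := by
          apply mul_le_mul_of_nonneg_right _ (by positivity)
          nlinarith
      _ = ‖lam‖^n / Real.Gamma (c * n + d) := by ring
  have hnormint : ∀ n : ℕ, ∫ t in Ioc (0:ℝ) y, ‖H n t‖ ≤ ‖lam‖ ^ n / Real.Gamma (c * n + d) := by
    intro n
    calc ∫ t in Ioc (0:ℝ) y, ‖H n t‖
        ≤ ∫ _ in Ioc (0:ℝ) y, (‖lam‖ ^ n / Real.Gamma (c * n + d)) := by
          apply setIntegral_mono_on (hint n).norm (integrableOn_const (by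
            rw [Real.volume_Ioc]; exact ENNReal.ofReal_ne_top)) measurableSet_Ioc (hbd n)
      _ = (volume (Ioc (0:ℝ) y)).toReal * (‖lam‖ ^ n / Real.Gamma (c * n + d)) := by
          rw [setIntegral_const]; rfl
      _ ≤ 1 * (‖lam‖ ^ n / Real.Gamma (c * n + d)) := by
          apply mul_le_mul_of_nonneg_right _ (by positivity)
          rw [Real.volume_Ioc, ENNReal.toReal_ofReal_eq_iff.2 (by linarith)] <;> linarith
      _ = ‖lam‖ ^ n / Real.Gamma (c * n + d) := one_mul _
  -- swap sum and integral
  have hswap : ∑' n, ∫ t in Ioc (0:ℝ) y, H n t = ∫ t in Ioc (0:ℝ) y, (∑' n, H n t) := by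
    apply integral_tsum_of_summable_integral_norm hint
    apply Summable.of_nonneg_of_le (fun n => integral_nonneg (fun t => norm_nonneg _)) hnormint
    exact summable_ml hM hc.le (by linarith)
  -- identify the integrand with the target on Ioc
  have hcongr : ∫ t in Ioc (0:ℝ) y, (((y - t) ^ (c - 1) : ℝ) : ℂ) * mlF c lam d t
      = ∫ t in Ioc (0:ℝ) y, (∑' n, H n t) := by
    apply setIntegral_congr_fun measurableSet_Ioc
    intro t ht
    dsimp only
    rw [mlF, ← tsum_mul_left]
    apply tsum_congr; intro n
    rw [hH, trc_eq ht.1.le (by linarith [ht.2])]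
    ring
  -- compute each term via Beta
  have hterm : ∀ n : ℕ, ∫ t in Ioc (0:ℝ) y, H n t
      = ((Real.Gamma c : ℝ) : ℂ) *
        (lam ^ n * ((y ^ (c * n + (c + d - 1)) : ℝ) : ℂ) / ((Real.Gamma (c * n + (c + d)) : ℝ) : ℂ)) := by
    intro n
    have hb : (0:ℝ) < c * n + d := by nlinarith [Nat.cast_nonneg (α := ℝ) n]
    have := betaC (a := c) (b := c * n + d) (by linarith) hb
      (by nlinarith [Nat.cast_nonneg (α := ℝ) n]) h0
    rw [intervalIntegral.integral_of_le h0] at this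
    have hH2 : ∫ t in Ioc (0:ℝ) y, H n t
        = ∫ t in Ioc (0:ℝ) y,
            ((((y - t) ^ (c - 1) : ℝ) : ℂ) * ((t ^ (c * n + d - 1) : ℝ) : ℂ)) *
              (lam ^ n / ((Real.Gamma (c * n + d) : ℝ) : ℂ)) := by
      apply setIntegral_congr_fun measurableSet_Ioc
      intro t ht; rw [hH]; dsimp only
      rw [show c * (n:ℝ) + (d - 1) = c * n + d - 1 by ring]
    rw [hH2, integral_mul_const, this]
    rw [show c + (c * (n:ℝ) + d) = c * n + (c + d) by ring,
      show c * (n:ℝ) + (c + d) - 1 = c * n + (c + d - 1) by ring]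
    have h5 : ((Real.Gamma (c * n + d) : ℝ) : ℂ) ≠ 0 := by exact_mod_cast (hΓpos n).ne'
    have h6 : ((Real.Gamma (c * n + (c + d)) : ℝ) : ℂ) ≠ 0 := by exact_mod_cast (hΓcd n).ne'
    push_cast
    field_simp
  rw [intervalIntegral.integral_of_le h0, hcongr, ← hswap]
  rw [tailSum, ← tsum_mul_left]
  apply tsum_congr; intro n
  rw [hterm n]

end frac


section fub
variable {x : ℝ} {K : ℝ → ℂ} {g : ℝ → ℂ} {BK : ℝ}

/-- Fubini for the Volterra double convolution. -/
lemma fubini_conv (hx0 : 0 ≤ x) (hx1 : x ≤ 1) {e : ℝ} (he : 0 ≤ e)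
    (hK : Continuous K) (hBK : ∀ t, ‖K t‖ ≤ BK)
    (hgm : AEStronglyMeasurable g (volume.restrict (Ioc (0:ℝ) 1)))
    (hgi : IntegrableOn g (Ioc (0:ℝ) 1)) :
    ∫ p in (0:ℝ)..x, (((x - p) ^ e : ℝ) : ℂ) * (∫ s in (0:ℝ)..p, K (p - s) * g s)
      = ∫ s in (0:ℝ)..x, (∫ p in s..x, (((x - p) ^ e : ℝ) : ℂ) * K (p - s)) * g s := by
  have hsub : Ioc (0:ℝ) x ⊆ Ioc 0 1 := Ioc_subset_Ioc le_rfl hx1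
  have hgm' : AEStronglyMeasurable g (volume.restrict (Ioc (0:ℝ) x)) :=
    hgm.mono_measure (Measure.restrict_mono hsub le_rfl)
  have hgi' : IntegrableOn g (Ioc (0:ℝ) x) := hgi.mono_set hsub
  set Φ : ℝ → ℝ → ℂ := fun p s =>
    if s < p then (((x - p) ^ e : ℝ) : ℂ) * K (p - s) * g s else 0 with hΦ
  have hKb : 0 ≤ BK := le_trans (norm_nonneg _) (hBK 0)
  -- integrability of slices in s
  have hslice : ∀ p, IntegrableOn (fun s => K (p - s) * g s) (Ioc (0:ℝ) x) := by
    intro p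
    apply Integrable.bdd_mul hgi'
      ((hK.comp (continuous_const.sub continuous_id)).aestronglyMeasurable)
    exact Eventually.of_forall (fun s => hBK _)
  have hmeasΦ : AEStronglyMeasurable (fun q : ℝ × ℝ => Φ q.1 q.2)
      ((volume.restrict (Ioc (0:ℝ) x)).prod (volume.restrict (Ioc (0:ℝ) x))) := by
    have h1 : AEStronglyMeasurable (fun q : ℝ × ℝ => (((x - q.1) ^ e : ℝ) : ℂ) * K (q.1 - q.2))
        ((volume.restrict (Ioc (0:ℝ) x)).prod (volume.restrict (Ioc (0:ℝ) x))) := by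
      apply Continuous.aestronglyMeasurable
      apply Continuous.mul
      · apply Complex.continuous_ofReal.comp
        exact (continuous_iff_continuousAt.2 fun y =>
          Real.continuousAt_rpow_const _ e (Or.inr he)).comp (continuous_const.sub continuous_fst)
      · exact hK.comp (continuous_fst.sub continuous_snd)
    have h2 : AEStronglyMeasurable (fun q : ℝ × ℝ => g q.2)
        ((volume.restrict (Ioc (0:ℝ) x)).prod (volume.restrict (Ioc (0:ℝ) x))) :=
      hgm'.comp_snd
    have h3 := (h1.mul h2).indicator
      (measurableSet_lt measurable_snd measurable_fst)
    apply h3.congr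
    apply Eventually.of_forall
    intro q
    rw [Set.indicator_apply]
    simp only [Set.mem_setOf_eq, hΦ]
    by_cases h : q.2 < q.1 <;> simp [h]
  have hintΦ : Integrable (fun q : ℝ × ℝ => Φ q.1 q.2)
      ((volume.restrict (Ioc (0:ℝ) x)).prod (volume.restrict (Ioc (0:ℝ) x))) := by
    apply Integrable.mono' (g := fun q : ℝ × ℝ => BK * ‖g q.2‖) ?_ hmeasΦ
    · rw [Filter.eventually_iff_exists_mem]
      refine ⟨(Ioc (0:ℝ) x) ×ˢ (Ioc (0:ℝ) x), ?_, ?_⟩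
      · refine (Measure.ae_prod_mem_iff_ae_ae_mem
          (measurableSet_Ioc.prod measurableSet_Ioc)).mpr ?_
        filter_upwards [ae_restrict_mem measurableSet_Ioc] with p hp
        filter_upwards [ae_restrict_mem measurableSet_Ioc] with s hs
        exact ⟨hp, hs⟩
      · rintro ⟨p, s⟩ ⟨hp, hs⟩
        simp only [hΦ]
        by_cases h : s < p
        · simp only [h, if_true, norm_mul, Complex.norm_real]
          have e1 : ‖(x - p) ^ e‖ ≤ 1 := by
            rw [Real.norm_of_nonneg (Real.rpow_nonneg (by linarith [hp.2]) _)]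
            exact Real.rpow_le_one (by linarith [hp.2]) (by linarith [hp.1]) he
          calc ‖(x-p) ^ e‖ * ‖K (p - s)‖ * ‖g s‖ ≤ 1 * BK * ‖g s‖ := by
                apply mul_le_mul_of_nonneg_right _ (norm_nonneg _)
                exact mul_le_mul e1 (hBK _) (norm_nonneg _) zero_le_one
            _ = BK * ‖g s‖ := by ring
        · simp only [h, if_false, norm_zero]
          positivity
    · -- integrability of the bound
      rw [integrable_prod_iff]
      · constructor
        · apply Eventually.of_forall
          intro p
          exact (hgi'.norm.const_mul BK)
        · apply (integrable_const_iff (c := ∫ (y : ℝ) in Ioc (0:ℝ) x, ‖BK * ‖g y‖‖)).2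
          right
          exact ⟨by rw [Measure.restrict_apply_univ, Real.volume_Ioc]; exact ENNReal.ofReal_lt_top⟩
      · exact (hgm'.norm.comp_snd).const_mul BK
  have hswap := integral_integral_swap (f := Φ) hintΦ
  have hae_ne : ∀ p : ℝ, ∀ᵐ s : ℝ ∂(volume : Measure ℝ), s ≠ p := by
    intro p
    rw [ae_iff]
    have : {s : ℝ | ¬s ≠ p} = {p} := by ext s; simp
    rw [this]
    exact Real.volume_singleton
  -- LHS identification
  have hLHS : ∫ p in (0:ℝ)..x, (((x - p) ^ e : ℝ) : ℂ) * (∫ s in (0:ℝ)..p, K (p - s) * g s)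
      = ∫ p in Ioc (0:ℝ) x, ∫ s in Ioc (0:ℝ) x, Φ p s := by
    rw [intervalIntegral.integral_of_le hx0]
    apply setIntegral_congr_fun measurableSet_Ioc
    intro p hp
    dsimp only
    rw [intervalIntegral.integral_of_le hp.1.le]
    have hun : Ioc (0:ℝ) p ∪ Ioc p x = Ioc 0 x := Ioc_union_Ioc_eq_Ioc hp.1.le hp.2
    have hi1 : IntegrableOn (fun s => Φ p s) (Ioc (0:ℝ) p) := by
      apply Integrable.congr (((hslice p).mono_set (Ioc_subset_Ioc le_rfl hp.2)).const_mul
        (((x - p) ^ e : ℝ) : ℂ))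
      filter_upwards [ae_restrict_of_ae (hae_ne p), ae_restrict_mem measurableSet_Ioc]
        with s hs hs2
      simp only [hΦ, if_pos (lt_of_le_of_ne hs2.2 hs)]
      ring
    have hi2 : IntegrableOn (fun s => Φ p s) (Ioc p x) := by
      apply (integrable_zero _ _ _).congr
      filter_upwards [ae_restrict_mem measurableSet_Ioc] with s hs
      simp only [hΦ, if_neg (not_lt.2 hs.1.le), Pi.zero_apply]
    rw [← hun, setIntegral_union (Set.Ioc_disjoint_Ioc_of_le le_rfl) measurableSet_Ioc hi1 hi2]
    have hz : ∫ s in Ioc p x, Φ p s = 0 := by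
      rw [setIntegral_congr_fun measurableSet_Ioc
        (fun s hs => by simp only [hΦ, if_neg (not_lt.2 hs.1.le), Pi.zero_apply]
          : EqOn (fun s => Φ p s) 0 _)]
      exact integral_zero _ _
    rw [hz, add_zero]
    rw [← integral_const_mul]
    apply setIntegral_congr_ae measurableSet_Ioc
    filter_upwards [hae_ne p] with s hs hs2
    simp only [hΦ, if_pos (lt_of_le_of_ne hs2.2 hs)]
    ring
  -- RHS identification
  have hRHS : ∫ s in (0:ℝ)..x, (∫ p in s..x, (((x - p) ^ e : ℝ) : ℂ) * K (p - s)) * g s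
      = ∫ s in Ioc (0:ℝ) x, ∫ p in Ioc (0:ℝ) x, Φ p s := by
    rw [intervalIntegral.integral_of_le hx0]
    apply setIntegral_congr_fun measurableSet_Ioc
    intro s hs
    dsimp only
    rw [intervalIntegral.integral_of_le hs.2]
    have hun : Ioc (0:ℝ) s ∪ Ioc s x = Ioc 0 x := Ioc_union_Ioc_eq_Ioc hs.1.le hs.2
    have hc2 : Continuous (fun p => (((x - p) ^ e : ℝ) : ℂ) * K (p - s)) := by
      apply Continuous.mul
      · exact Complex.continuous_ofReal.comp ((continuous_iff_continuousAt.2 fun y =>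
          Real.continuousAt_rpow_const _ e (Or.inr he)).comp (continuous_const.sub continuous_id))
      · exact hK.comp (continuous_id.sub continuous_const)
    have hi1 : IntegrableOn (fun p => Φ p s) (Ioc (0:ℝ) s) := by
      apply (integrable_zero _ _ _).congr
      filter_upwards [ae_restrict_mem measurableSet_Ioc] with p hp
      simp only [hΦ, if_neg (not_lt.2 hp.2), Pi.zero_apply]
    have hi2 : IntegrableOn (fun p => Φ p s) (Ioc s x) := by
      apply IntegrableOn.congr_fun ((hc2.integrableOn_Ioc).mul_const (g s)) _ measurableSet_Ioc
      intro p hp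
      simp only [hΦ, if_pos hp.1]
    rw [← hun, setIntegral_union (Set.Ioc_disjoint_Ioc_of_le le_rfl) measurableSet_Ioc hi1 hi2]
    have hz : ∫ p in Ioc (0:ℝ) s, Φ p s = 0 := by
      rw [setIntegral_congr_fun measurableSet_Ioc
        (fun p hp => by simp only [hΦ, if_neg (not_lt.2 hp.2), Pi.zero_apply]
          : EqOn (fun p => Φ p s) 0 _)]
      exact integral_zero _ _
    rw [hz, zero_add, ← integral_mul_const]
    apply setIntegral_congr_fun measurableSet_Ioc
    intro p hp
    simp only [hΦ, if_pos hp.1]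
  rw [hLHS, hRHS]
  exact hswap

end fub


lemma cont_conv {K : ℝ → ℂ} {g : ℝ → ℂ} {BK : ℝ}
    (hK : Continuous K) (hBK : ∀ t, ‖K t‖ ≤ BK)
    (hgm : AEStronglyMeasurable g (volume.restrict (Ioc (0:ℝ) 1)))
    (hgi : IntegrableOn g (Ioc (0:ℝ) 1)) :
    ContinuousOn (fun y => ∫ s in (0:ℝ)..y, K (y - s) * g s) (Icc (0:ℝ) 1) := by
  set F : ℝ → ℝ → ℂ := fun y s => (Ioc (0:ℝ) y).indicator (fun s => K (y - s) * g s) s with hF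
  have hrepr : ∀ y ∈ Icc (0:ℝ) 1,
      (∫ s in (0:ℝ)..y, K (y - s) * g s) = ∫ s in Ioc (0:ℝ) 1, F y s := by
    intro y hy
    rw [intervalIntegral.integral_of_le hy.1, hF]
    dsimp only
    rw [setIntegral_indicator measurableSet_Ioc,
      Set.inter_eq_self_of_subset_right (Ioc_subset_Ioc le_rfl hy.2)]
  intro x hx
  rw [ContinuousWithinAt]
  have key : Tendsto (fun y => ∫ s in Ioc (0:ℝ) 1, F y s) (𝓝[Icc (0:ℝ) 1] x)
      (𝓝 (∫ s in Ioc (0:ℝ) 1, F x s)) := by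
    apply tendsto_integral_filter_of_dominated_convergence (bound := fun s => BK * ‖g s‖)
    · apply Eventually.of_forall
      intro y
      exact (((hK.comp (continuous_const.sub continuous_id)).aestronglyMeasurable).mul
        hgm).indicator measurableSet_Ioc
    · apply Eventually.of_forall
      intro y
      apply Eventually.of_forall
      intro s
      refine (norm_indicator_le_norm_self _ _).trans ?_
      rw [norm_mul]
      exact mul_le_mul_of_nonneg_right (hBK _) (norm_nonneg _)
    · exact hgi.norm.const_mul BK
    · have hane : ∀ᵐ s : ℝ ∂(volume : Measure ℝ), s ≠ x := by
        rw [ae_iff]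
        have : {s : ℝ | ¬s ≠ x} = {x} := by ext s; simp
        rw [this]; exact Real.volume_singleton
      filter_upwards [ae_restrict_of_ae hane, ae_restrict_mem measurableSet_Ioc] with s hsne hs
      rcases lt_or_gt_of_ne hsne with hlt | hgt
      · -- s < x : eventually F y s = K (y - s) * g s
        have h1 : ∀ᶠ y in 𝓝[Icc (0:ℝ) 1] x, F y s = K (y - s) * g s := by
          filter_upwards [nhdsWithin_le_nhds (Ioi_mem_nhds hlt)] with y hy
          have hmem : s ∈ Ioc (0:ℝ) y := ⟨hs.1, le_of_lt hy⟩
          show (Ioc (0:ℝ) y).indicator (fun s => K (y - s) * g s) s = K (y - s) * g s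
          exact Set.indicator_of_mem hmem _
        have hmem : s ∈ Ioc (0:ℝ) x := ⟨hs.1, hlt.le⟩
        have h2 : F x s = K (x - s) * g s := by
          show (Ioc (0:ℝ) x).indicator (fun s => K (x - s) * g s) s = K (x - s) * g s
          exact Set.indicator_of_mem hmem _
        rw [h2]
        apply Tendsto.congr' (h1.mono fun y hy => hy.symm)
        exact (((hK.comp (continuous_id.sub continuous_const)).mul
          continuous_const).tendsto x).mono_left nhdsWithin_le_nhds
      · -- x < s : eventually F y s = 0
        have h1 : ∀ᶠ y in 𝓝[Icc (0:ℝ) 1] x, F y s = 0 := by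
          filter_upwards [nhdsWithin_le_nhds (Iio_mem_nhds hgt)] with y hy
          show (Ioc (0:ℝ) y).indicator (fun s => K (y - s) * g s) s = 0
          exact Set.indicator_of_notMem
            (fun hmem : s ∈ Ioc (0:ℝ) y => absurd hmem.2 (not_le.2 hy)) _
        have h2 : F x s = 0 := by
          show (Ioc (0:ℝ) x).indicator (fun s => K (x - s) * g s) s = 0
          exact Set.indicator_of_notMem
            (fun hmem : s ∈ Ioc (0:ℝ) x => absurd hmem.2 (not_le.2 hgt)) _
        rw [h2]
        exact Tendsto.congr' (h1.mono fun y hy => hy.symm) tendsto_const_nhds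
  rw [hrepr x hx]
  apply key.congr'
  filter_upwards [self_mem_nhdsWithin] with y hy
  exact (hrepr y hy).symm

/-- the Mittag-Leffler representation solves the integral equation
u = u0 + lam I^{a+1} u - I^{a+1} g on [0,1]. -/
theorem statement_5 (α : ℝ) (hα : α ∈ Set.Ioo (0:ℝ) 1) (lam : ℂ) (u₀ : ℂ)
    (g : ℝ → ℂ) (hg : SqIntOn g) (u : ℝ → ℂ)
    (hu : ∀ x ∈ Set.Icc (0:ℝ) 1,
      u x = u₀ * mittagLeffler (α + 1) 1 (lam * ((x ^ (α + 1) : ℝ) : ℂ)) -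
        ∫ s in (0:ℝ)..x, (((x - s) ^ α : ℝ) : ℂ) *
          mittagLeffler (α + 1) (α + 1) (lam * (((x - s) ^ (α + 1) : ℝ) : ℂ)) * g s) :
    ContinuousOn u (Set.Icc (0:ℝ) 1) ∧ u 0 = u₀ ∧
      ∀ x ∈ Set.Icc (0:ℝ) 1,
        u x = u₀ + lam * fracInt (α + 1) u x - fracInt (α + 1) g x := by
  obtain ⟨hα0, hα1⟩ := hα
  have hc : (1:ℝ) < α + 1 := by linarith
  have hc2 : (α:ℝ) + 1 ≤ 2 := by linarith
  have hcne : (α:ℝ) + 1 ≠ 0 := by linarith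
  set Ef : ℝ → ℂ := mlF (α+1) lam 1 with hEf
  set Kf : ℝ → ℂ := mlF (α+1) lam (α+1) with hKf
  set BK : ℝ := ∑' n : ℕ, ‖lam‖ ^ n / Real.Gamma ((α+1) * n + (α+1)) with hBK
  have hKbound : ∀ t, ‖Kf t‖ ≤ BK := fun t => norm_mlF_le lam hc.le hc.le t
  have hKcont : Continuous Kf := cont_mlF lam hc.le hc.le
  have hEcont : Continuous Ef := cont_mlF lam hc.le le_rfl
  have hgm : AEStronglyMeasurable g (volume.restrict (Ioc (0:ℝ) 1)) := hg.1
  have hgi : IntegrableOn g (Ioc (0:ℝ) 1) := by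
    have hbd : IntegrableOn (fun s : ℝ => (1:ℝ) + ‖g s‖ ^ 2) (Ioc 0 1) := by
      apply Integrable.add _ hg.2
      apply (integrable_const_iff (c := (1:ℝ))).2
      right
      exact ⟨by rw [Measure.restrict_apply_univ, Real.volume_Ioc]; exact ENNReal.ofReal_lt_top⟩
    apply Integrable.mono' hbd hgm
    apply Eventually.of_forall
    intro s
    have h1 := norm_nonneg (g s)
    have h2 := sq_nonneg (‖g s‖ - 1)
    have h3 : ‖‖g s‖ ^ 2‖ = ‖g s‖ ^ 2 := Real.norm_of_nonneg (by positivity)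
    nlinarith [Real.norm_of_nonneg (add_nonneg zero_le_one (sq_nonneg ‖g s‖) : (0:ℝ) ≤ 1 + ‖g s‖^2) ▸ le_refl (1 + ‖g s‖^2)]
  -- the nice representation
  set V : ℝ → ℂ := fun y => ∫ s in (0:ℝ)..y, Kf (y - s) * g s with hV
  have hu' : ∀ x ∈ Icc (0:ℝ) 1, u x = u₀ * Ef x - V x := by
    intro x hx
    rw [hu x hx, hV]
    have e1 : mittagLeffler (α+1) 1 (lam * ((x ^ (α+1) : ℝ) : ℂ)) = Ef x :=
      mlF_one_eq_ml lam hc.le hx.1 hx.2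
    rw [e1]
    congr 1
    apply intervalIntegral.integral_congr
    intro s hs
    rw [uIcc_of_le hx.1] at hs
    have h0 : (0:ℝ) ≤ x - s := by linarith [hs.2]
    have h1 : x - s ≤ 1 := by linarith [hs.1, hx.2]
    have e2 := mlF_c_eq_ml (c := α+1) lam hc h0 h1
    rw [show (α:ℝ) + 1 - 1 = α by ring] at e2
    dsimp only
    rw [hKf]
    rw [← e2]
  have hVcont : ContinuousOn V (Icc (0:ℝ) 1) := cont_conv hKcont hKbound hgm hgi
  refine ⟨?_, ?_, ?_⟩
  · -- continuity
    apply ContinuousOn.congr (((continuous_const.mul hEcont).continuousOn).sub hVcont)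
    intro x hx
    exact hu' x hx
  · -- u 0 = u₀
    rw [hu 0 ⟨le_rfl, zero_le_one⟩, intervalIntegral.integral_same, sub_zero,
      Real.zero_rpow hcne, Complex.ofReal_zero, mul_zero]
    have : mittagLeffler (α+1) 1 0 = 1 := by
      rw [mittagLeffler, tsum_eq_single 0 (fun n hn => by
        rw [zero_pow hn, zero_div])]
      norm_num [Real.Gamma_one]
    rw [this, mul_one]
  · -- the integral equation
    intro x hx
    obtain ⟨hx0, hx1⟩ := hx
    have hΓpos : (0:ℝ) < Real.Gamma (α+1) := Real.Gamma_pos_of_pos (by linarith)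
    have hΓC : ((Real.Gamma (α+1) : ℝ) : ℂ) ≠ 0 := by exact_mod_cast hΓpos.ne'
    have hgm' : AEStronglyMeasurable g (volume.restrict (Ioc (0:ℝ) x)) :=
      hgm.mono_measure (Measure.restrict_mono (Ioc_subset_Ioc le_rfl hx1) le_rfl)
    have hgi' : IntegrableOn g (Ioc (0:ℝ) x) := hgi.mono_set (Ioc_subset_Ioc le_rfl hx1)
    have hcont_pow : Continuous (fun p : ℝ => (((x - p) ^ (α + 1 - 1) : ℝ) : ℂ)) := by
      apply Complex.continuous_ofReal.comp
      exact (cont_rpow_const (by linarith)).comp (continuous_const.sub continuous_id)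
    -- bounded * g integrability helper
    have hbddmul : ∀ (h : ℝ → ℂ), AEStronglyMeasurable h (volume.restrict (Ioc (0:ℝ) x)) →
        ∀ C : ℝ, (∀ᵐ s ∂(volume.restrict (Ioc (0:ℝ) x)), ‖h s‖ ≤ C) →
        IntegrableOn (fun s => h s * g s) (Ioc (0:ℝ) x) := by
      intro h hm C hb
      refine Integrable.mono' (hgi'.norm.const_mul C) (hm.mul hgm') ?_
      filter_upwards [hb] with s hs
      calc ‖h s * g s‖ = ‖h s‖ * ‖g s‖ := norm_mul _ _
        _ ≤ C * ‖g s‖ := mul_le_mul_of_nonneg_right hs (norm_nonneg _)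
    -- step 1: split I1
    set T1 : ℂ := tailSum (α+1) lam 1 x with hT1
    have hfracE : ∫ p in (0:ℝ)..x, (((x - p) ^ (α + 1 - 1) : ℝ) : ℂ) * Ef p
        = ((Real.Gamma (α+1) : ℝ) : ℂ) * T1 := frac_mlF lam hc hc2 le_rfl hx0 hx1
    set J : ℂ := ∫ s in (0:ℝ)..x,
        (∫ p in s..x, (((x - p) ^ (α + 1 - 1) : ℝ) : ℂ) * Kf (p - s)) * g s with hJ
    have hfub : ∫ p in (0:ℝ)..x, (((x - p) ^ (α + 1 - 1) : ℝ) : ℂ)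
          * (∫ s in (0:ℝ)..p, Kf (p - s) * g s) = J :=
      fubini_conv hx0 hx1 (by linarith) hKcont hKbound hgm hgi
    have hI1 : ∫ p in (0:ℝ)..x, (((x - p) ^ (α + 1 - 1) : ℝ) : ℂ) * u p
        = u₀ * (((Real.Gamma (α+1) : ℝ) : ℂ) * T1) - J := by
      have hcongr : ∫ p in (0:ℝ)..x, (((x - p) ^ (α + 1 - 1) : ℝ) : ℂ) * u p
          = ∫ p in (0:ℝ)..x, (u₀ * ((((x - p) ^ (α + 1 - 1) : ℝ) : ℂ) * Ef p)
              - (((x - p) ^ (α + 1 - 1) : ℝ) : ℂ) * V p) := by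
        apply intervalIntegral.integral_congr
        intro p hp
        rw [uIcc_of_le hx0] at hp
        dsimp only
        rw [hu' p ⟨hp.1, le_trans hp.2 hx1⟩]
        ring
      have hiA : IntervalIntegrable
          (fun p => u₀ * ((((x - p) ^ (α + 1 - 1) : ℝ) : ℂ) * Ef p)) volume 0 x :=
        (Continuous.intervalIntegrable (continuous_const.mul (hcont_pow.mul hEcont)) 0 x)
      have hiB : IntervalIntegrable
          (fun p => (((x - p) ^ (α + 1 - 1) : ℝ) : ℂ) * V p) volume 0 x := by
        apply ContinuousOn.intervalIntegrable
        rw [uIcc_of_le hx0]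
        exact (hcont_pow.continuousOn).mul (hVcont.mono (Icc_subset_Icc le_rfl hx1))
      rw [hcongr, intervalIntegral.integral_sub hiA hiB,
        intervalIntegral.integral_const_mul, hfracE, hfub]
    -- step 4: identify inner kernel integral
    have hinner : ∀ s ∈ Icc (0:ℝ) x,
        (∫ p in s..x, (((x - p) ^ (α + 1 - 1) : ℝ) : ℂ) * Kf (p - s))
          = ((Real.Gamma (α+1) : ℝ) : ℂ) * tailSum (α+1) lam (α+1) (x - s) := by
      intro s hs
      have hsub := intervalIntegral.integral_comp_sub_right
        (fun t => (((x - s - t) ^ (α + 1 - 1) : ℝ) : ℂ) * Kf t) s (a := s) (b := x)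
      rw [sub_self] at hsub
      have : (∫ p in s..x, (((x - p) ^ (α + 1 - 1) : ℝ) : ℂ) * Kf (p - s))
          = ∫ p in s..x, (((x - s - (p - s)) ^ (α + 1 - 1) : ℝ) : ℂ) * Kf (p - s) := by
        apply intervalIntegral.integral_congr
        intro p hp
        dsimp only
        rw [sub_sub_sub_cancel_right]
      rw [this, hsub]
      exact frac_mlF lam hc hc2 hc.le (by linarith [hs.2]) (by linarith [hs.1, hs.2, hx1])
    -- step 5: lam * J = Γ * V x - I2
    set I2 : ℂ := ∫ p in (0:ℝ)..x, (((x - p) ^ (α + 1 - 1) : ℝ) : ℂ) * g p with hI2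
    have hKmul : IntegrableOn (fun s => Kf (x - s) * g s) (Ioc (0:ℝ) x) := by
      apply hbddmul _ ((hKcont.comp (continuous_const.sub continuous_id)).aestronglyMeasurable)
        BK (Eventually.of_forall (fun s => hKbound _))
    have hPmul : IntegrableOn (fun s => (((x - s) ^ (α + 1 - 1) : ℝ) : ℂ) * g s)
        (Ioc (0:ℝ) x) := by
      apply hbddmul _ (hcont_pow.aestronglyMeasurable) 1
      filter_upwards [ae_restrict_mem measurableSet_Ioc] with s hs
      rw [Complex.norm_real, Real.norm_of_nonneg (Real.rpow_nonneg (by linarith [hs.2]) _)]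
      exact Real.rpow_le_one (by linarith [hs.2]) (by linarith [hs.1]) (by linarith)
    have hEJ : lam * J = ((Real.Gamma (α+1) : ℝ) : ℂ) * V x - I2 := by
      rw [hJ, ← intervalIntegral.integral_const_mul]
      have hstep : ∫ s in (0:ℝ)..x,
          lam * ((∫ p in s..x, (((x - p) ^ (α + 1 - 1) : ℝ) : ℂ) * Kf (p - s)) * g s)
          = ∫ s in (0:ℝ)..x, (((Real.Gamma (α+1) : ℝ) : ℂ) * (Kf (x - s) * g s)
              - (((x - s) ^ (α + 1 - 1) : ℝ) : ℂ) * g s) := by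
        apply intervalIntegral.integral_congr
        intro s hs
        rw [uIcc_of_le hx0] at hs
        dsimp only
        rw [hinner s hs]
        have hshift := mlF_shift (c := α+1) (d := α+1) lam hc.le hc.le
          (show (0:ℝ) ≤ x - s by linarith [hs.2])
          (show x - s ≤ 1 by linarith [hs.1, hx1])
        rw [← hKf] at hshift
        rw [hshift]
        rw [show (α:ℝ) + 1 - 1 = α by ring]
        field_simp
        ring
      rw [hstep]
      have hii1 : IntervalIntegrable
          (fun s => ((Real.Gamma (α+1) : ℝ) : ℂ) * (Kf (x - s) * g s)) volume 0 x := by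
        rw [intervalIntegrable_iff_integrableOn_Ioc_of_le hx0]
        exact hKmul.const_mul _
      have hii2 : IntervalIntegrable
          (fun s => (((x - s) ^ (α + 1 - 1) : ℝ) : ℂ) * g s) volume 0 x := by
        rw [intervalIntegrable_iff_integrableOn_Ioc_of_le hx0]
        exact hPmul
      rw [intervalIntegral.integral_sub hii1 hii2, intervalIntegral.integral_const_mul,
        hI2, hV]
    -- final algebra
    have hEfx : Ef x = 1 + lam * T1 := by
      have hshift := mlF_shift (c := α+1) (d := 1) lam hc.le le_rfl hx0 hx1
      rw [← hEf, ← hT1] at hshift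
      rw [hshift, sub_self, Real.rpow_zero, Real.Gamma_one]
      norm_num
    rw [fracInt, fracInt, if_neg hcne, if_neg hcne]
    rw [hI1, ← hI2]
    rw [Complex.real_smul, Complex.real_smul, Complex.ofReal_inv]
    rw [hu' x ⟨hx0, hx1⟩, hEfx]
    field_simp
    linear_combination hEJ
end

section
/- Let L > 0 and α, β ∈ (0,1) with α + β ≤ 1, and let u : [0,L] → ℝ be absolutely continuous. Then ∂^α D^β u = D^{α+β} u; concretely, for a.e. x ∈ (0,L) the function y ↦ (I^{1−α}(I^{1−β}u′))(y) is differentiable at x with derivative equal to (I^{1−α−β}u′)(x) (with the convention I⁰f = f, so that for α + β = 1 the derivative equals u′(x)). -/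
open MeasureTheory Set Filter

/-- Riemann–Liouville fractional integral of order gamma on (0, L) (real-valued),
with the convention that the integral of order 0 is the identity. -/
noncomputable def fracIntR (γ : ℝ) (f : ℝ → ℝ) (x : ℝ) : ℝ :=
  if γ = 0 then f x
  else (Real.Gamma γ)⁻¹ * ∫ p in (0:ℝ)..x, (x - p) ^ (γ - 1) * f p

open Topology in
lemma aeFTC {L : ℝ} (hL : 0 < L) {g : ℝ → ℝ} (hg : IntervalIntegrable g volume 0 L) :
    ∀ᵐ x ∂(volume.restrict (Set.Ioo (0:ℝ) L)),
      HasDerivAt (fun y => ∫ t in (0:ℝ)..y, g t) (g x) x := by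
  set G : ℝ → ℝ := (Set.Ioo (0:ℝ) L).indicator g with hGdef
  have hgOn : IntegrableOn g (Set.Ioo 0 L) volume := by
    have := (intervalIntegrable_iff_integrableOn_Ioc_of_le hL.le).mp hg
    exact this.mono_set Set.Ioo_subset_Ioc_self
  have hG : Integrable G volume := (integrable_indicator_iff measurableSet_Ioo).mpr hgOn
  have hloc : LocallyIntegrable G volume := hG.locallyIntegrable
  have key := IsUnifLocDoublingMeasure.ae_tendsto_average_norm_sub (μ := (volume : Measure ℝ)) hloc 1
  filter_upwards [ae_restrict_of_ae key, ae_restrict_mem measurableSet_Ioo] with x hx hxI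
  have hδ : Tendsto (fun j : ℝ => |j - x|) (𝓝[≠] x) (𝓝[>] 0) := by
    rw [tendsto_nhdsWithin_iff]
    constructor
    · have : Tendsto (fun j : ℝ => |j - x|) (𝓝 x) (𝓝 |x - x|) :=
        (continuous_abs.comp (continuous_id.sub continuous_const)).continuousAt
      simpa using this.mono_left nhdsWithin_le_nhds
    · filter_upwards [self_mem_nhdsWithin] with j hj
      exact abs_pos.mpr (sub_ne_zero.mpr hj)
  have havg : Tendsto (fun j : ℝ => ⨍ y in Metric.closedBall x |j - x|, ‖G y - G x‖)
      (𝓝[≠] x) (𝓝 0) := by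
    apply hx (fun _ => x) (fun j => |j - x|) hδ
    filter_upwards with j
    simp [abs_nonneg]
  -- the function y ↦ ∫₀ʸ g agrees with Ψ := y ↦ ∫₀ʸ G near x
  set Ψ : ℝ → ℝ := fun y => ∫ t in (0:ℝ)..y, G t with hΨdef
  have heq : Ψ =ᶠ[𝓝 x] (fun y => ∫ t in (0:ℝ)..y, g t) := by
    filter_upwards [isOpen_Ioo.mem_nhds hxI] with y hy
    apply intervalIntegral.integral_congr_ae
    filter_upwards with t ht
    have : t ∈ Set.Ioo (0:ℝ) L := by
      rw [Set.uIoc_of_le hy.1.le] at ht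
      exact ⟨ht.1, lt_of_le_of_lt ht.2 hy.2⟩
    exact Set.indicator_of_mem this g
  have hGx : G x = g x := Set.indicator_of_mem hxI g
  rw [show (g x) = G x from hGx.symm]
  apply HasDerivAt.congr_of_eventuallyEq (f := Ψ) _ heq.symm
  -- main estimate
  rw [hasDerivAt_iff_tendsto]
  have hGi : ∀ a b : ℝ, IntervalIntegrable G volume a b := fun a b => hG.intervalIntegrable
  have hsub : ∀ j t : ℝ, t ∈ Set.uIoc x j → t ∈ Metric.closedBall x |j - x| := by
    intro j t ht
    rw [Metric.mem_closedBall, Real.dist_eq]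
    obtain ⟨h1, h2⟩ := ht
    rcases le_total x j with h | h
    · have h1' : x < t := by simpa [min_eq_left h] using h1
      have h2' : t ≤ j := by simpa [max_eq_right h] using h2
      rw [abs_of_nonneg (by linarith : (0:ℝ) ≤ j - x), abs_le]
      constructor <;> linarith
    · have h1' : j < t := by simpa [min_eq_right h] using h1
      have h2' : t ≤ x := by simpa [max_eq_left h] using h2
      rw [abs_of_nonpos (by linarith : j - x ≤ 0), abs_le]
      constructor <;> linarith
  have hbound : ∀ j : ℝ, j ≠ x →
      ‖j - x‖⁻¹ * ‖Ψ j - Ψ x - (j - x) • G x‖ ≤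
        2 * ⨍ y in Metric.closedBall x |j - x|, ‖G y - G x‖ := by
    intro j hj
    have hr : 0 < |j - x| := abs_pos.mpr (sub_ne_zero.mpr hj)
    have h1 : Ψ j - Ψ x = ∫ t in x..j, G t := by
      rw [hΨdef]
      exact (intervalIntegral.integral_interval_sub_left (hGi 0 j) (hGi 0 x))
    have h2 : Ψ j - Ψ x - (j - x) • G x = ∫ t in x..j, (G t - G x) := by
      rw [h1, intervalIntegral.integral_sub (hGi x j) intervalIntegrable_const,
        intervalIntegral.integral_const]
    have hIcb : IntegrableOn (fun t => ‖G t - G x‖) (Metric.closedBall x |j - x|) volume :=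
      ((hG.integrableOn.sub ((integrableOn_const_iff).mpr
        (Or.inr measure_closedBall_lt_top))).norm)
    have h3 : ‖Ψ j - Ψ x - (j - x) • G x‖ ≤ ∫ t in Metric.closedBall x |j - x|, ‖G t - G x‖ := by
      rw [h2]
      refine le_trans (intervalIntegral.norm_integral_le_integral_norm_uIoc) ?_
      apply setIntegral_mono_set hIcb
      · filter_upwards with t using norm_nonneg _
      · exact HasSubset.Subset.eventuallyLE (fun t ht => hsub j t ht)
    have h4 : ∫ t in Metric.closedBall x |j - x|, ‖G t - G x‖ =
        (2 * |j - x|) * ⨍ y in Metric.closedBall x |j - x|, ‖G y - G x‖ := by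
      rw [setAverage_eq, Real.volume_real_closedBall hr.le, smul_eq_mul,
        ← mul_assoc, mul_inv_cancel₀ (by linarith), one_mul]
    calc ‖j - x‖⁻¹ * ‖Ψ j - Ψ x - (j - x) • G x‖
        ≤ ‖j - x‖⁻¹ * ((2 * |j - x|) * ⨍ y in Metric.closedBall x |j - x|, ‖G y - G x‖) := by
          apply mul_le_mul_of_nonneg_left _ (by positivity)
          rw [← h4]; exact h3
      _ = 2 * ⨍ y in Metric.closedBall x |j - x|, ‖G y - G x‖ := by
          rw [Real.norm_eq_abs]
          field_simp
  have hpunct : Tendsto (fun j => ‖j - x‖⁻¹ * ‖Ψ j - Ψ x - (j - x) • G x‖) (𝓝[≠] x) (𝓝 0) := by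
    apply squeeze_zero' (by filter_upwards with j using by positivity)
      (by filter_upwards [self_mem_nhdsWithin] with j hj using hbound j hj)
    simpa using havg.const_mul 2
  rw [← nhdsNE_sup_pure x, tendsto_sup]
  refine ⟨hpunct, ?_⟩
  have : ‖(x:ℝ) - x‖⁻¹ * ‖Ψ x - Ψ x - (x - x) • G x‖ = 0 := by simp
  rw [show (𝓝 (0:ℝ)) = 𝓝 (‖(x:ℝ) - x‖⁻¹ * ‖Ψ x - Ψ x - (x - x) • G x‖) from by rw [this]]
  exact tendsto_pure_nhds _ x

lemma realBeta {a b : ℝ} (ha : 0 < a) (hb : 0 < b) :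
    ∫ s in (0:ℝ)..1, s ^ (b - 1) * (1 - s) ^ (a - 1)
      = Real.Gamma a * Real.Gamma b / Real.Gamma (a + b) := by
  have hC : Complex.betaIntegral b a =
      ((∫ s in (0:ℝ)..1, s ^ (b - 1) * (1 - s) ^ (a - 1) : ℝ) : ℂ) := by
    rw [Complex.betaIntegral, ← intervalIntegral.integral_ofReal]
    apply intervalIntegral.integral_congr_ae
    filter_upwards with s hs
    rw [Set.uIoc_of_le (by norm_num : (0:ℝ) ≤ 1)] at hs
    push_cast
    rw [Complex.ofReal_cpow hs.1.le, Complex.ofReal_cpow (by linarith [hs.2] : (0:ℝ) ≤ 1 - s)]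
    push_cast
    ring
  have hgam := Complex.Gamma_mul_Gamma_eq_betaIntegral
    (s := (b:ℂ)) (t := (a:ℂ)) (by simpa using hb) (by simpa using ha)
  rw [hC] at hgam
  rw [Complex.Gamma_ofReal, Complex.Gamma_ofReal, ← Complex.ofReal_add, Complex.Gamma_ofReal,
    ← Complex.ofReal_mul, ← Complex.ofReal_mul] at hgam
  have := Complex.ofReal_injective hgam
  have hΓ : Real.Gamma (b + a) ≠ 0 := (Real.Gamma_pos_of_pos (by linarith)).ne'
  field_simp at this ⊢
  rw [show a + b = b + a from add_comm a b]
  linarith [this]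

lemma kernelInt {a b q y : ℝ} (ha : 0 < a) (hb : 0 < b) (hqy : q < y) :
    ∫ p in q..y, (y - p) ^ (a - 1) * (p - q) ^ (b - 1)
      = (y - q) ^ (a + b - 1) * (Real.Gamma a * Real.Gamma b / Real.Gamma (a + b)) := by
  have hr : 0 < y - q := by linarith
  -- substitute p = q + (y - q) * s
  have hsub := intervalIntegral.smul_integral_comp_add_mul
    (f := fun p => (y - p) ^ (a - 1) * (p - q) ^ (b - 1)) (a := 0) (b := 1) (y - q) q
  simp only [mul_zero, add_zero, mul_one] at hsub
  rw [show q + (y - q) = y by ring] at hsub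
  rw [← hsub]
  have : ∀ s ∈ Set.uIcc (0:ℝ) 1,
      (y - (q + (y - q) * s)) ^ (a - 1) * (q + (y - q) * s - q) ^ (b - 1)
        = (y - q) ^ (a + b - 2) * (s ^ (b - 1) * (1 - s) ^ (a - 1)) := by
    intro s hs
    rw [Set.uIcc_of_le (by norm_num : (0:ℝ) ≤ 1)] at hs
    have h1 : y - (q + (y - q) * s) = (y - q) * (1 - s) := by ring
    have h2 : q + (y - q) * s - q = (y - q) * s := by ring
    rw [h1, h2, Real.mul_rpow hr.le (by linarith [hs.2]), Real.mul_rpow hr.le hs.1]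
    rw [show (y - q) ^ (a - 1) * (1 - s) ^ (a - 1) * ((y - q) ^ (b - 1) * s ^ (b - 1))
        = ((y - q) ^ (a - 1) * (y - q) ^ (b - 1)) * (s ^ (b - 1) * (1 - s) ^ (a - 1)) from by ring,
      ← Real.rpow_add hr]
    ring_nf
  rw [intervalIntegral.integral_congr this, intervalIntegral.integral_const_mul, realBeta ha hb,
    smul_eq_mul]
  have h5 : (y - q) * (y - q) ^ (a + b - 2) = (y - q) ^ (a + b - 1) := by
    nth_rewrite 1 [← Real.rpow_one (y - q)]
    rw [← Real.rpow_add hr]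
    ring_nf
  rw [← mul_assoc, h5]
lemma kernelII {a b q y : ℝ} (ha : 0 < a) (ha1 : a ≤ 1) (hb : 0 < b) (hqy : q < y) :
    IntervalIntegrable (fun p => (y - p) ^ (a - 1) * (p - q) ^ (b - 1)) volume q y := by
  set m := (q + y) / 2 with hm
  have hqm : q < m := by rw [hm]; linarith
  have hmy : m < y := by rw [hm]; linarith
  apply IntervalIntegrable.trans (b := m)
  · -- on [q, m] : (y - p)^(a-1) continuous, (p - q)^(b-1) integrable
    have h2 : IntervalIntegrable (fun p => (p - q) ^ (b - 1)) volume q m := by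
      have := (intervalIntegral.intervalIntegrable_rpow' (a := 0) (b := m - q)
        (by linarith : (-1:ℝ) < b - 1)).comp_sub_right q
      simpa using this
    apply IntervalIntegrable.continuousOn_mul h2
    intro p hp
    rw [Set.uIcc_of_le hqm.le] at hp
    have hne : y - p ≠ 0 := ne_of_gt (by linarith [hp.2] : (0:ℝ) < y - p)
    exact (((continuous_const.sub continuous_id).continuousAt (x := p)).rpow_const
      (Or.inl hne)).continuousWithinAt
  · -- on [m, y] : (p - q)^(b-1) continuous, (y - p)^(a-1) integrable
    have h2 : IntervalIntegrable (fun p => (y - p) ^ (a - 1)) volume m y := by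
      have := (intervalIntegral.intervalIntegrable_rpow' (a := y - m) (b := 0)
        (by linarith : (-1:ℝ) < a - 1)).comp_sub_left y
      simpa using this
    apply IntervalIntegrable.mul_continuousOn h2
    intro p hp
    rw [Set.uIcc_of_le hmy.le] at hp
    have hne : p - q ≠ 0 := ne_of_gt (by linarith [hp.1] : (0:ℝ) < p - q)
    exact (((continuous_id.sub continuous_const).continuousAt (x := p)).rpow_const
      (Or.inl hne)).continuousWithinAt
lemma cutIoi {y q : ℝ} (hq : 0 < q) (h : ℝ → ℝ) :
    ∫ p in Set.Ioo (0:ℝ) y, (if q < p then h p else 0)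
      = ∫ p in Set.Ioo q y, h p := by
  have h1 : (fun p => if q < p then h p else 0) = Set.indicator (Set.Ioi q) h := by
    ext p; simp [Set.indicator_apply, Set.mem_Ioi]
  rw [h1, integral_indicator measurableSet_Ioi, Measure.restrict_restrict measurableSet_Ioi]
  have h2 : Set.Ioi q ∩ Set.Ioo 0 y = Set.Ioo q y := by
    ext p
    simp only [Set.mem_inter_iff, Set.mem_Ioi, Set.mem_Ioo]
    exact ⟨fun ⟨u, _, w⟩ => ⟨u, w⟩, fun ⟨u, w⟩ => ⟨u, lt_trans hq u, w⟩⟩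
  rw [h2]

lemma cutIio {y p : ℝ} (hp : p < y) (h : ℝ → ℝ) :
    ∫ q in Set.Ioo (0:ℝ) y, (if q < p then h q else 0)
      = ∫ q in Set.Ioo (0:ℝ) p, h q := by
  have h1 : (fun q => if q < p then h q else 0) = Set.indicator (Set.Iio p) h := by
    ext q; simp [Set.indicator_apply, Set.mem_Iio]
  rw [h1, integral_indicator measurableSet_Iio, Measure.restrict_restrict measurableSet_Iio]
  have h2 : Set.Iio p ∩ Set.Ioo 0 y = Set.Ioo 0 p := by
    ext q
    simp only [Set.mem_inter_iff, Set.mem_Iio, Set.mem_Ioo]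
    exact ⟨fun ⟨u, w, _⟩ => ⟨w, u⟩, fun ⟨u, w⟩ => ⟨w, u, lt_trans w hp⟩⟩
  rw [h2]

lemma sliceInt {a b y q : ℝ} (ha : 0 < a) (hb : 0 < b) (hq : q ∈ Set.Ioo (0:ℝ) y) (c : ℝ) :
    ∫ p in Set.Ioo (0:ℝ) y, (if q < p then (y - p) ^ (a - 1) * ((p - q) ^ (b - 1) * c) else 0)
      = ((y - q) ^ (a + b - 1) * (Real.Gamma a * Real.Gamma b / Real.Gamma (a + b))) * c := by
  rw [cutIoi hq.1]
  rw [show (fun p => (y - p) ^ (a - 1) * ((p - q) ^ (b - 1) * c))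
      = fun p => ((y - p) ^ (a - 1) * (p - q) ^ (b - 1)) * c from by ext p; ring]
  rw [MeasureTheory.integral_mul_const, ← integral_Ioc_eq_integral_Ioo,
    ← intervalIntegral.integral_of_le hq.2.le, kernelInt ha hb hq.2]

lemma prodIntF {a b y : ℝ} (ha : 0 < a) (ha1 : a ≤ 1) (hb : 0 < b)
    (hab : 1 ≤ a + b) (hy : 0 < y) {f : ℝ → ℝ} (hfm : StronglyMeasurable f)
    (hf : IntegrableOn f (Set.Ioc 0 y) volume) :
    Integrable (Function.uncurry
        (fun p q => if q < p then (y - p) ^ (a - 1) * ((p - q) ^ (b - 1) * f q) else 0))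
      ((volume.restrict (Set.Ioo (0:ℝ) y)).prod (volume.restrict (Set.Ioo (0:ℝ) y))) := by
  set B := Real.Gamma a * Real.Gamma b / Real.Gamma (a + b) with hB
  have hBpos : 0 < B := by
    rw [hB]
    have g1 := Real.Gamma_pos_of_pos ha
    have g2 := Real.Gamma_pos_of_pos hb
    have g3 := Real.Gamma_pos_of_pos (by linarith : (0:ℝ) < a + b)
    positivity
  set μ := volume.restrict (Set.Ioo (0:ℝ) y) with hμ
  have hfI : IntegrableOn f (Set.Ioo 0 y) volume := hf.mono_set Set.Ioo_subset_Ioc_self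
  set F : ℝ → ℝ → ℝ :=
    fun p q => if q < p then (y - p) ^ (a - 1) * ((p - q) ^ (b - 1) * f q) else 0 with hF
  -- measurability
  have hFm : StronglyMeasurable (Function.uncurry F) := by
    apply StronglyMeasurable.ite (measurableSet_lt measurable_snd measurable_fst)
    · exact ((((measurable_const.sub measurable_fst).pow_const _)).mul
        ((((measurable_fst.sub measurable_snd).pow_const _)).mul
          (hfm.measurable.comp measurable_snd))).stronglyMeasurable
    · exact stronglyMeasurable_const
  -- slice integrability in p for fixed q
  have hslice : ∀ q ∈ Set.Ioo (0:ℝ) y, Integrable (fun p => F p q) μ := by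
    intro q hq
    have h1 : (fun p => F p q)
        = Set.indicator (Set.Ioi q) (fun p => ((y - p) ^ (a - 1) * (p - q) ^ (b - 1)) * f q) := by
      ext p
      simp only [hF, Set.indicator_apply, Set.mem_Ioi]
      by_cases h : q < p <;> simp [h] <;> ring
    rw [h1, hμ, integrable_indicator_iff measurableSet_Ioi, IntegrableOn,
      Measure.restrict_restrict measurableSet_Ioi]
    have h2 : Set.Ioi q ∩ Set.Ioo 0 y = Set.Ioo q y := by
      ext p
      simp only [Set.mem_inter_iff, Set.mem_Ioi, Set.mem_Ioo]
      exact ⟨fun ⟨u, _, w⟩ => ⟨u, w⟩, fun ⟨u, w⟩ => ⟨u, lt_trans hq.1 u, w⟩⟩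
    rw [h2]
    have h3 : IntervalIntegrable (fun p => ((y - p) ^ (a - 1) * (p - q) ^ (b - 1)) * f q)
        volume q y := (kernelII ha ha1 hb hq.2).mul_const (f q)
    exact ((intervalIntegrable_iff_integrableOn_Ioc_of_le hq.2.le).mp h3).mono_set
      Set.Ioo_subset_Ioc_self
  -- norm of slice integral
  have hnormint : ∀ q ∈ Set.Ioo (0:ℝ) y,
      ∫ p, ‖F p q‖ ∂μ = ((y - q) ^ (a + b - 1) * B) * |f q| := by
    intro q hq
    have h1 : ∫ p, ‖F p q‖ ∂μ
        = ∫ p in Set.Ioo (0:ℝ) y,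
            (if q < p then (y - p) ^ (a - 1) * ((p - q) ^ (b - 1) * |f q|) else 0) := by
      rw [hμ]
      apply setIntegral_congr_fun measurableSet_Ioo
      intro p hp
      simp only [hF]
      by_cases h : q < p
      · simp only [if_pos h]
        rw [Real.norm_eq_abs, abs_mul, abs_mul,
          abs_of_nonneg (Real.rpow_nonneg (by linarith [hp.2] : (0:ℝ) ≤ y - p) _),
          abs_of_nonneg (Real.rpow_nonneg (by linarith : (0:ℝ) ≤ p - q) _)]
      · simp [h]
    rw [h1, sliceInt ha hb hq]
  -- product integrability
  show Integrable (Function.uncurry F) (μ.prod μ)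
  rw [integrable_prod_iff' hFm.aestronglyMeasurable]
  constructor
  · filter_upwards [ae_restrict_mem measurableSet_Ioo] with q hq
    exact hslice q hq
  · have hC : Integrable (fun q => (y ^ (a + b - 1) * B) * |f q|) μ :=
      (hfI.norm.const_mul _)
    apply Integrable.mono hC (hFm.norm.integral_prod_left').aestronglyMeasurable
    filter_upwards [ae_restrict_mem measurableSet_Ioo] with q hq
    have h2 := hnormint q hq
    simp only [Function.uncurry] at h2 ⊢
    rw [h2]
    have hnn : 0 ≤ (y - q) ^ (a + b - 1) * B :=
      mul_nonneg (Real.rpow_nonneg (by linarith [hq.2]) _) hBpos.le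
    rw [Real.norm_eq_abs, Real.norm_eq_abs, abs_mul, abs_abs, abs_of_nonneg hnn, abs_mul,
      abs_of_nonneg (mul_nonneg (Real.rpow_nonneg hy.le _) hBpos.le), abs_abs]
    apply mul_le_mul_of_nonneg_right _ (abs_nonneg _)
    apply mul_le_mul_of_nonneg_right _ hBpos.le
    exact Real.rpow_le_rpow (by linarith [hq.2]) (by linarith [hq.1]) (by linarith)

lemma semigroup_aux {a b y : ℝ} (ha : 0 < a) (ha1 : a ≤ 1) (hb : 0 < b)
    (hab : 1 ≤ a + b) (hy : 0 < y) {f : ℝ → ℝ} (hfm : StronglyMeasurable f)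
    (hf : IntegrableOn f (Set.Ioc 0 y) volume) :
    ∫ p in (0:ℝ)..y, (y - p) ^ (a - 1) * ∫ q in (0:ℝ)..p, (p - q) ^ (b - 1) * f q
      = (Real.Gamma a * Real.Gamma b / Real.Gamma (a + b)) *
        ∫ q in (0:ℝ)..y, (y - q) ^ (a + b - 1) * f q := by
  set B := Real.Gamma a * Real.Gamma b / Real.Gamma (a + b) with hB
  set μ := volume.restrict (Set.Ioo (0:ℝ) y) with hμ
  set F : ℝ → ℝ → ℝ :=
    fun p q => if q < p then (y - p) ^ (a - 1) * ((p - q) ^ (b - 1) * f q) else 0 with hF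
  have hint : Integrable (Function.uncurry F) (μ.prod μ) := prodIntF ha ha1 hb hab hy hfm hf
  -- Fubini
  have hswap := MeasureTheory.integral_integral_swap (μ := μ) (ν := μ) (f := F) hint
  -- identify LHS
  have hLHS : ∫ p in (0:ℝ)..y, (y - p) ^ (a - 1) * ∫ q in (0:ℝ)..p, (p - q) ^ (b - 1) * f q
      = ∫ p, (∫ q, F p q ∂μ) ∂μ := by
    rw [intervalIntegral.integral_of_le hy.le, integral_Ioc_eq_integral_Ioo, hμ]
    apply setIntegral_congr_fun measurableSet_Ioo
    intro p hp
    dsimp only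
    simp only [hF]
    rw [cutIio hp.2 (fun q => (y - p) ^ (a - 1) * ((p - q) ^ (b - 1) * f q)),
      integral_const_mul, ← integral_Ioc_eq_integral_Ioo,
      ← intervalIntegral.integral_of_le hp.1.le]
  -- identify RHS
  have hRHS : ∫ q, (∫ p, F p q ∂μ) ∂μ = B * ∫ q in (0:ℝ)..y, (y - q) ^ (a + b - 1) * f q := by
    rw [intervalIntegral.integral_of_le hy.le, integral_Ioc_eq_integral_Ioo,
      ← integral_const_mul]
    apply setIntegral_congr_fun measurableSet_Ioo
    intro q hq
    dsimp only
    have hx : (∫ p, F p q ∂μ) = ((y - q) ^ (a + b - 1) * B) * f q := by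
      simp only [hF, hμ]
      exact sliceInt ha hb hq (f q)
    rw [hx]
    ring
  rw [hLHS, hswap, hRHS]

lemma semigroup {a b y : ℝ} (ha : 0 < a) (ha1 : a ≤ 1) (hb : 0 < b)
    (hab : 1 ≤ a + b) (hy : 0 < y) {f : ℝ → ℝ}
    (hf : IntegrableOn f (Set.Ioc 0 y) volume) :
    ∫ p in (0:ℝ)..y, (y - p) ^ (a - 1) * ∫ q in (0:ℝ)..p, (p - q) ^ (b - 1) * f q
      = (Real.Gamma a * Real.Gamma b / Real.Gamma (a + b)) *
        ∫ q in (0:ℝ)..y, (y - q) ^ (a + b - 1) * f q := by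
  have hm := hf.aestronglyMeasurable
  set g := hm.mk f with hg
  have hae : ∀ᵐ x ∂(volume : Measure ℝ), x ∈ Set.Ioc (0:ℝ) y → f x = g x :=
    (ae_restrict_iff' measurableSet_Ioc).mp hm.ae_eq_mk
  have hgm : StronglyMeasurable g := hm.stronglyMeasurable_mk
  have hgi : IntegrableOn g (Set.Ioc 0 y) volume := hf.congr hm.ae_eq_mk
  have hL : ∀ p, p ∈ Set.Ioc (0:ℝ) y →
      (∫ q in (0:ℝ)..p, (p - q) ^ (b - 1) * f q)
        = ∫ q in (0:ℝ)..p, (p - q) ^ (b - 1) * g q := by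
    intro p hp
    apply intervalIntegral.integral_congr_ae
    filter_upwards [hae] with q hq hq2
    rw [Set.uIoc_of_le hp.1.le] at hq2
    rw [hq ⟨hq2.1, le_trans hq2.2 hp.2⟩]
  have e1 : ∫ p in (0:ℝ)..y, (y - p) ^ (a - 1) * ∫ q in (0:ℝ)..p, (p - q) ^ (b - 1) * f q
      = ∫ p in (0:ℝ)..y, (y - p) ^ (a - 1) * ∫ q in (0:ℝ)..p, (p - q) ^ (b - 1) * g q := by
    apply intervalIntegral.integral_congr_ae
    filter_upwards with p hp
    rw [Set.uIoc_of_le hy.le] at hp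
    rw [hL p hp]
  have e2 : ∫ q in (0:ℝ)..y, (y - q) ^ (a + b - 1) * f q
      = ∫ q in (0:ℝ)..y, (y - q) ^ (a + b - 1) * g q := by
    apply intervalIntegral.integral_congr_ae
    filter_upwards [hae] with q hq hq2
    rw [Set.uIoc_of_le hy.le] at hq2
    rw [hq hq2]
  rw [e1, e2]
  exact semigroup_aux ha ha1 hb hab hy hgm hgi

lemma fracInt_integrable {c L : ℝ} (hc : 0 < c) (hc1 : c ≤ 1) (hL : 0 < L) {f : ℝ → ℝ}
    (hf : IntegrableOn f (Set.Ioc 0 L) volume) :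
    IntegrableOn (fun t => ∫ q in (0:ℝ)..t, (t - q) ^ (c - 1) * f q) (Set.Ioc 0 L) volume := by
  have hm := hf.aestronglyMeasurable
  set g := hm.mk f with hg
  have hae : ∀ᵐ x ∂(volume : Measure ℝ), x ∈ Set.Ioc (0:ℝ) L → f x = g x :=
    (ae_restrict_iff' measurableSet_Ioc).mp hm.ae_eq_mk
  have hgm : StronglyMeasurable g := hm.stronglyMeasurable_mk
  have hgi : IntegrableOn g (Set.Ioc 0 L) volume := hf.congr hm.ae_eq_mk
  have hprod := prodIntF (a := 1) (b := c) one_pos le_rfl hc (by linarith) hL hgm hgi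
  have hfun : (Function.uncurry
        (fun p q => if q < p then (L - p) ^ ((1:ℝ) - 1) * ((p - q) ^ (c - 1) * g q) else 0))
      = Function.uncurry (fun p q : ℝ => if q < p then (p - q) ^ (c - 1) * g q else 0) := by
    funext z
    simp [Function.uncurry, Real.rpow_zero]
  rw [hfun] at hprod
  have hInt := hprod.integral_prod_left
  simp only [Function.uncurry_apply_pair] at hInt
  have heq : ∀ᵐ t ∂(volume.restrict (Set.Ioo (0:ℝ) L)),
      (∫ q in Set.Ioo (0:ℝ) L, (if q < t then (t - q) ^ (c - 1) * g q else 0))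
        = ∫ q in (0:ℝ)..t, (t - q) ^ (c - 1) * f q := by
    filter_upwards [ae_restrict_mem measurableSet_Ioo] with t ht
    rw [cutIio ht.2 (fun q => (t - q) ^ (c - 1) * g q), ← integral_Ioc_eq_integral_Ioo,
      ← intervalIntegral.integral_of_le ht.1.le]
    symm
    apply intervalIntegral.integral_congr_ae
    filter_upwards [hae] with q hq hq2
    rw [Set.uIoc_of_le ht.1.le] at hq2
    rw [hq ⟨hq2.1, le_trans hq2.2 ht.2.le⟩]
  have hres : IntegrableOn (fun t => ∫ q in (0:ℝ)..t, (t - q) ^ (c - 1) * f q)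
      (Set.Ioo 0 L) volume := hInt.congr heq
  rw [IntegrableOn, ← Measure.restrict_congr_set Ioo_ae_eq_Ioc]
  exact hres

lemma key_eq (L α β : ℝ) (hL : 0 < L) (hα : α ∈ Set.Ioo (0:ℝ) 1)
    (hβ : β ∈ Set.Ioo (0:ℝ) 1) (hαβ : α + β ≤ 1)
    (u' : ℝ → ℝ) (hu'I : IntegrableOn u' (Set.Ioc 0 L) volume)
    {y : ℝ} (hy : y ∈ Set.Ioo (0:ℝ) L) :
    fracIntR (1 - α) (fracIntR (1 - β) u') y
      = ∫ t in (0:ℝ)..y, fracIntR (1 - α - β) u' t := by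
  obtain ⟨hα0, hα1⟩ := hα
  obtain ⟨hβ0, hβ1⟩ := hβ
  have ha : (0:ℝ) < 1 - α := by linarith
  have hb : (0:ℝ) < 1 - β := by linarith
  have hΓa : Real.Gamma (1 - α) ≠ 0 := (Real.Gamma_pos_of_pos ha).ne'
  have hΓb : Real.Gamma (1 - β) ≠ 0 := (Real.Gamma_pos_of_pos hb).ne'
  have hu'y : IntegrableOn u' (Set.Ioc 0 y) volume :=
    hu'I.mono_set (Set.Ioc_subset_Ioc_right hy.2.le)
  have hsg := semigroup (a := 1 - α) (b := 1 - β) ha (by linarith) hb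
    (by linarith : 1 ≤ (1 - α) + (1 - β)) hy.1 hu'y
  -- unfold the left-hand side
  have hA : fracIntR (1 - α) (fracIntR (1 - β) u') y
      = (Real.Gamma (1 - α))⁻¹ * ((Real.Gamma (1 - β))⁻¹ *
          ∫ p in (0:ℝ)..y, (y - p) ^ (1 - α - 1) *
            ∫ q in (0:ℝ)..p, (p - q) ^ (1 - β - 1) * u' q) := by
    rw [fracIntR, if_neg ha.ne']
    have h1 : ∫ p in (0:ℝ)..y, (y - p) ^ (1 - α - 1) * fracIntR (1 - β) u' p
        = (Real.Gamma (1 - β))⁻¹ * ∫ p in (0:ℝ)..y, (y - p) ^ (1 - α - 1) *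
            ∫ q in (0:ℝ)..p, (p - q) ^ (1 - β - 1) * u' q := by
      rw [← intervalIntegral.integral_const_mul]
      apply intervalIntegral.integral_congr
      intro p _
      dsimp only
      rw [fracIntR, if_neg hb.ne']
      ring
    rw [h1]
  rw [hA, hsg]
  rw [show (1:ℝ) - α + (1 - β) - 1 = 1 - α - β from by ring,
    show (1:ℝ) - α + (1 - β) = 1 + (1 - α - β) from by ring]
  rcases eq_or_lt_of_le hαβ with hc | hc
  · -- α + β = 1
    have h0 : 1 - α - β = 0 := by linarith
    rw [h0]
    simp only [Real.rpow_zero, one_mul, add_zero, Real.Gamma_one]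
    have : ∀ t, fracIntR (0:ℝ) u' t = u' t := fun t => by rw [fracIntR, if_pos rfl]
    rw [intervalIntegral.integral_congr (fun t _ => this t)]
    field_simp
  · -- α + β < 1
    have hc0 : (0:ℝ) < 1 - α - β := by linarith
    have hΓc : Real.Gamma (1 - α - β) ≠ 0 := (Real.Gamma_pos_of_pos hc0).ne'
    have hB : ∀ t, fracIntR (1 - α - β) u' t
        = (Real.Gamma (1 - α - β))⁻¹ * ∫ q in (0:ℝ)..t, (t - q) ^ (1 - α - β - 1) * u' q :=
      fun t => by rw [fracIntR, if_neg hc0.ne']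
    rw [intervalIntegral.integral_congr (fun t _ => hB t), intervalIntegral.integral_const_mul]
    have hsg2 := semigroup (a := 1) (b := 1 - α - β) one_pos le_rfl hc0
      (by linarith : 1 ≤ 1 + (1 - α - β)) hy.1 hu'y
    have he : ∫ t in (0:ℝ)..y, ∫ q in (0:ℝ)..t, (t - q) ^ (1 - α - β - 1) * u' q
        = ∫ t in (0:ℝ)..y, (y - t) ^ ((1:ℝ) - 1) *
            ∫ q in (0:ℝ)..t, (t - q) ^ (1 - α - β - 1) * u' q := by
      apply intervalIntegral.integral_congr
      intro t _
      dsimp only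
      norm_num
    rw [he, hsg2, Real.Gamma_one]
    rw [show (1:ℝ) + (1 - α - β) - 1 = 1 - α - β from by ring]
    field_simp

/-- composition rule d^a D^b u = D^{a+b} u for an absolutely continuous u:
for a.e. x in (0, L), y -> I^{1-a}(I^{1-b} u')(y) is differentiable at x with
derivative I^{1-a-b} u'(x) (with the convention that the fractional integral of
order 0 is the identity). -/
theorem statement_13 (L α β : ℝ) (hL : 0 < L) (hα : α ∈ Set.Ioo (0:ℝ) 1)
    (hβ : β ∈ Set.Ioo (0:ℝ) 1) (hαβ : α + β ≤ 1)
    (u u' : ℝ → ℝ) (hu' : IntervalIntegrable u' MeasureTheory.volume 0 L)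
    (hu : ∀ x ∈ Set.Icc (0:ℝ) L, u x = u 0 + ∫ t in (0:ℝ)..x, u' t) :
    ∀ᵐ x ∂(MeasureTheory.volume.restrict (Set.Ioo (0:ℝ) L)),
      HasDerivAt (fun y => fracIntR (1 - α) (fracIntR (1 - β) u') y)
        (fracIntR (1 - α - β) u' x) x := by
  have hu'I : IntegrableOn u' (Set.Ioc 0 L) volume :=
    (intervalIntegrable_iff_integrableOn_Ioc_of_le hL.le).mp hu'
  have hgI : IntervalIntegrable (fracIntR (1 - α - β) u') volume 0 L := by
    rcases eq_or_lt_of_le hαβ with hc | hc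
    · have h0 : 1 - α - β = 0 := by linarith
      have he : fracIntR (1 - α - β) u' = u' := by
        funext t; rw [fracIntR, if_pos h0]
      rw [he]; exact hu'
    · have hc0 : (0:ℝ) < 1 - α - β := by linarith
      have he : fracIntR (1 - α - β) u' = fun t => (Real.Gamma (1 - α - β))⁻¹ *
          ∫ q in (0:ℝ)..t, (t - q) ^ (1 - α - β - 1) * u' q := by
        funext t; rw [fracIntR, if_neg hc0.ne']
      rw [he, intervalIntegrable_iff_integrableOn_Ioc_of_le hL.le]
      exact (fracInt_integrable hc0 (by linarith [hα.1, hβ.1]) hL hu'I).const_mul _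
  filter_upwards [aeFTC hL hgI, ae_restrict_mem measurableSet_Ioo] with x hx hxI
  apply hx.congr_of_eventuallyEq
  filter_upwards [isOpen_Ioo.mem_nhds hxI] with y hy
  exact key_eq L α β hL hα hβ hαβ u' hu'I hy
end

section
/- Let α ∈ (0,1), L > 0, and let f : [0,L] → ℝ be absolutely continuous. Then for a.e. x ∈ (0,L), (D^α f)(x) · f(x) ≥ (1/2) (D^α f²)(x); concretely, (I^{1−α}f′)(x) · f(x) ≥ (I^{1−α}(f f′))(x) for a.e. x ∈ (0,L). -/
open MeasureTheory Set Filter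

lemma swap_int (a b : ℝ) (u v : ℝ → ℝ)
    (hu : IntegrableOn u (Set.Ioc a b)) (hv : IntegrableOn v (Set.Ioc a b)) :
    ∫ p in Set.Ioc a b, (∫ s in Set.Ioc a p, u s) * v p
      = ∫ s in Set.Ioc a b, u s * ∫ p in Set.Ioc s b, v p := by
  set μ := volume.restrict (Set.Ioc a b) with hμ
  set F : ℝ → ℝ → ℝ := fun s p => if s ≤ p then u s * v p else 0 with hF
  have hFm : AEStronglyMeasurable (Function.uncurry F) (μ.prod μ) := by
    have h1 : AEStronglyMeasurable (fun z : ℝ × ℝ => u z.1 * v z.2) (μ.prod μ) :=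
      (hu.aestronglyMeasurable.comp_fst).mul (hv.aestronglyMeasurable.comp_snd)
    have : Function.uncurry F = {z : ℝ × ℝ | z.1 ≤ z.2}.indicator
        (fun z : ℝ × ℝ => u z.1 * v z.2) := by
      ext z
      by_cases h : z.1 ≤ z.2 <;>
        simp [Function.uncurry, hF, h, Set.indicator_of_mem, Set.indicator_of_notMem]
    rw [this]
    exact h1.indicator (measurableSet_le measurable_fst measurable_snd)
  have hFi : Integrable (Function.uncurry F) (μ.prod μ) := by
    refine Integrable.mono' ((hu.norm).mul_prod (hv.norm)) hFm ?_
    refine Eventually.of_forall fun z => ?_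
    rcases le_or_gt z.1 z.2 with h | h
    · simp only [Function.uncurry, hF, h, if_true, Real.norm_eq_abs, abs_mul, abs_abs, le_refl]
    · simp only [Function.uncurry, hF, not_le.2 h, if_false, Real.norm_eq_abs, abs_mul,
        abs_abs, abs_zero]
      positivity
  have hswap := MeasureTheory.integral_integral_swap hFi
  -- compute both sides
  have hL : (∫ s, (∫ p, F s p ∂μ) ∂μ) = ∫ s in Set.Ioc a b, u s * ∫ p in Set.Ioc s b, v p := by
    refine setIntegral_congr_fun measurableSet_Ioc fun s hs => ?_
    have : (fun p => F s p) = (Set.Ici s).indicator (fun p => u s * v p) := by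
      ext p; by_cases h : s ≤ p <;> simp [hF, h]
    rw [this, hμ, integral_indicator measurableSet_Ici, Measure.restrict_restrict measurableSet_Ici]
    have hset : Set.Ici s ∩ Set.Ioc a b = Set.Icc s b := by
      ext p; constructor
      · rintro ⟨h1, h2, h3⟩; exact ⟨h1, h3⟩
      · rintro ⟨h1, h2⟩; exact ⟨h1, lt_of_lt_of_le hs.1 h1, h2⟩
    rw [hset, integral_Icc_eq_integral_Ioc, integral_const_mul]
  have hR : (∫ p, (∫ s, F s p ∂μ) ∂μ) = ∫ p in Set.Ioc a b, (∫ s in Set.Ioc a p, u s) * v p := by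
    refine setIntegral_congr_fun measurableSet_Ioc fun p hp => ?_
    have : (fun s => F s p) = (Set.Iic p).indicator (fun s => u s * v p) := by
      ext s; by_cases h : s ≤ p <;> simp [hF, h]
    rw [this, hμ, integral_indicator measurableSet_Iic, Measure.restrict_restrict measurableSet_Iic]
    have hset : Set.Iic p ∩ Set.Ioc a b = Set.Ioc a p := by
      ext s; constructor
      · rintro ⟨h1, h2, h3⟩; exact ⟨h2, h1⟩
      · rintro ⟨h1, h2⟩; exact ⟨h2, h1, le_trans h2 hp.2⟩
    rw [hset, integral_mul_const]
  rw [← hR, ← hswap, hL]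

lemma primitive_mul_integrable (a b : ℝ) (g h : ℝ → ℝ)
    (hg : IntegrableOn g (Set.Icc a b)) (hh : IntegrableOn h (Set.Ioc a b)) :
    IntegrableOn (fun t => (∫ p in Set.Ioc a t, g p) * h t) (Set.Ioc a b) := by
  refine Integrable.bdd_mul (c := ∫ p in Set.Icc a b, |g p|) hh ?_ ?_
  · exact ((intervalIntegral.continuousOn_primitive hg).mono Set.Ioc_subset_Icc_self).aestronglyMeasurable
      measurableSet_Ioc
  · filter_upwards [ae_restrict_mem measurableSet_Ioc] with t ht
    rw [Real.norm_eq_abs]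
    calc |∫ p in Set.Ioc a t, g p| ≤ ∫ p in Set.Ioc a t, |g p| := by
          simpa using norm_integral_le_integral_norm (μ := volume.restrict (Set.Ioc a t))
            (f := g)
      _ ≤ ∫ p in Set.Icc a b, |g p| := by
          refine setIntegral_mono_set hg.norm ?_ ?_
          · exact Eventually.of_forall fun p => abs_nonneg _
          · exact Eventually.of_forall (Set.Ioc_subset_Icc_self.trans
              (Set.Icc_subset_Icc le_rfl ht.2))



lemma sq_int (a b : ℝ) (g : ℝ → ℝ) (hg : IntegrableOn g (Set.Icc a b)) :
    ∫ p in Set.Ioc a b, (∫ t in Set.Ioc a p, g t) * g p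
      = (∫ t in Set.Ioc a b, g t) ^ 2 / 2 := by
  have hgIoc : IntegrableOn g (Set.Ioc a b) := hg.mono_set Set.Ioc_subset_Icc_self
  have h := swap_int a b g g hgIoc hgIoc
  have hsplit : ∀ t ∈ Set.Ioc a b,
      g t * ∫ p in Set.Ioc t b, g p
        = g t * (∫ p in Set.Ioc a b, g p) - (∫ p in Set.Ioc a t, g p) * g t := by
    intro t ht
    have hadd : (∫ p in Set.Ioc a t, g p) + (∫ p in Set.Ioc t b, g p)
        = ∫ p in Set.Ioc a b, g p := by
      rw [← setIntegral_union ((Set.Ioc_disjoint_Ioc_of_le le_rfl)) measurableSet_Ioc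
        (hgIoc.mono_set (Set.Ioc_subset_Ioc le_rfl ht.2))
        (hgIoc.mono_set (Set.Ioc_subset_Ioc ht.1.le le_rfl)),
        Set.Ioc_union_Ioc_eq_Ioc ht.1.le ht.2]
    linear_combination g t * hadd
  rw [setIntegral_congr_fun measurableSet_Ioc hsplit,
    integral_sub (hgIoc.mul_const _) (primitive_mul_integrable a b g g hg hgIoc),
    integral_mul_const] at h
  linarith [h]

lemma E_int (a b A : ℝ) (g : ℝ → ℝ) (hg : IntegrableOn g (Set.Icc a b)) :
    ∫ p in Set.Ioc a b, g p * (A - ∫ t in Set.Ioc a p, g t)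
      = A ^ 2 / 2 - (A - ∫ t in Set.Ioc a b, g t) ^ 2 / 2 := by
  have hgIoc : IntegrableOn g (Set.Ioc a b) := hg.mono_set Set.Ioc_subset_Icc_self
  have hfun : (fun p => g p * (A - ∫ t in Set.Ioc a p, g t))
      = fun p => g p * A - (∫ t in Set.Ioc a p, g t) * g p := by ext p; ring
  rw [hfun, integral_sub (hgIoc.mul_const A) (primitive_mul_integrable a b g g hg hgIoc),
    sq_int a b g hg, integral_mul_const]
  ring

lemma weight_ftc (α x p : ℝ) (hα : 0 < α) (hp : 0 ≤ p) (hpx : p < x) :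
    ∫ s in Set.Ioc 0 p, α * (x - s) ^ (-α - 1) = (x - p) ^ (-α) - x ^ (-α) := by
  rw [← intervalIntegral.integral_of_le hp]
  have huIcc : Set.uIcc (0:ℝ) p = Set.Icc 0 p := Set.uIcc_of_le hp
  have hderiv : ∀ s ∈ Set.uIcc (0:ℝ) p,
      HasDerivAt (fun s => (x - s) ^ (-α)) (α * (x - s) ^ (-α - 1)) s := by
    intro s hs
    rw [huIcc] at hs
    have hxs : (0:ℝ) < x - s := by linarith [hs.2]
    have h1 : HasDerivAt (fun s : ℝ => x - s) (-1) s := by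
      simpa using (hasDerivAt_id s).const_sub x
    have h2 := h1.rpow_const (p := -α) (Or.inl (ne_of_gt hxs))
    convert h2 using 1
    ring
  have hcont : ContinuousOn (fun s => α * (x - s) ^ (-α - 1)) (Set.uIcc (0:ℝ) p) := by
    rw [huIcc]
    apply continuousOn_const.mul
    apply ContinuousOn.rpow_const (continuousOn_const.sub continuousOn_id)
    intro s hs
    exact Or.inl (ne_of_gt (by linarith [hs.2] : (0:ℝ) < x - s))
  have := intervalIntegral.integral_eq_sub_of_hasDerivAt hderiv hcont.intervalIntegrable
  rw [this]
  norm_num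

lemma claim_lb (α x b T : ℝ) (hα0 : 0 < α) (hb0 : 0 < b) (hbx : b < x)
    (g : ℝ → ℝ) (hg : IntegrableOn g (Set.Icc 0 x)) :
    -((x - b) ^ (-α) * ((T - ∫ t in Set.Ioc 0 b, g t) ^ 2 / 2))
      ≤ ∫ p in Set.Ioc 0 b, (x - p) ^ (-α) * (g p * (T - ∫ t in Set.Ioc 0 p, g t)) := by
  have hx0 : 0 < x := hb0.trans hbx
  have hgb : IntegrableOn g (Set.Icc 0 b) := hg.mono_set (Set.Icc_subset_Icc le_rfl hbx.le)
  have hGcont : ContinuousOn (fun t => ∫ s in Set.Ioc 0 t, g s) (Set.Icc 0 b) :=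
    intervalIntegral.continuousOn_primitive hgb
  -- integrability of gh p = g p * (T - G p) on Ioc 0 b
  have hgh_int : IntegrableOn (fun p => g p * (T - ∫ t in Set.Ioc 0 p, g t)) (Set.Ioc 0 b) := by
    have h1 : IntegrableOn (fun p => (T - ∫ t in Set.Ioc 0 p, g t) * g p) (Set.Ioc 0 b) := by
      refine Integrable.bdd_mul (c := |T| + ∫ p in Set.Icc 0 b, |g p|)
        (hgb.mono_set Set.Ioc_subset_Icc_self) ?_ ?_
      · exact ((continuousOn_const.sub hGcont).mono
          Set.Ioc_subset_Icc_self).aestronglyMeasurable measurableSet_Ioc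
      · filter_upwards [ae_restrict_mem measurableSet_Ioc] with t ht
        rw [Real.norm_eq_abs]
        have h2 : |∫ s in Set.Ioc 0 t, g s| ≤ ∫ p in Set.Icc 0 b, |g p| := by
          calc |∫ s in Set.Ioc 0 t, g s| ≤ ∫ s in Set.Ioc 0 t, |g s| := by
                simpa using norm_integral_le_integral_norm (μ := volume.restrict (Set.Ioc 0 t)) g
            _ ≤ ∫ p in Set.Icc 0 b, |g p| := by
                refine setIntegral_mono_set hgb.norm
                  (Eventually.of_forall fun p => abs_nonneg _)
                  (Eventually.of_forall (Set.Ioc_subset_Icc_self.trans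
                    (Set.Icc_subset_Icc le_rfl ht.2)))
        calc |T - ∫ s in Set.Ioc 0 t, g s| ≤ |T| + |∫ s in Set.Ioc 0 t, g s| := abs_sub _ _
          _ ≤ |T| + ∫ p in Set.Icc 0 b, |g p| := by linarith
    exact h1.congr_fun (fun p _ => by ring) measurableSet_Ioc
  -- additivity of the primitive
  have hGadd : ∀ s p : ℝ, 0 ≤ s → s ≤ p → p ≤ b →
      (∫ t in Set.Ioc 0 p, g t) = (∫ t in Set.Ioc 0 s, g t) + ∫ t in Set.Ioc s p, g t := by
    intro s p hs hsp hpb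
    rw [← Set.Ioc_union_Ioc_eq_Ioc hs hsp,
      setIntegral_union (Set.Ioc_disjoint_Ioc_of_le le_rfl) measurableSet_Ioc
        (hgb.mono_set (Set.Ioc_subset_Icc_self.trans
          (Set.Icc_subset_Icc le_rfl (hsp.trans hpb))))
        (hgb.mono_set ((Set.Ioc_subset_Icc_self).trans
          (Set.Icc_subset_Icc hs hpb)))]
  -- the key identity E for segments ending at b
  have hE : ∀ s : ℝ, 0 ≤ s → s ≤ b →
      (∫ p in Set.Ioc s b, g p * (T - ∫ t in Set.Ioc 0 p, g t))
        = (T - ∫ t in Set.Ioc 0 s, g t) ^ 2 / 2 - (T - ∫ t in Set.Ioc 0 b, g t) ^ 2 / 2 := by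
    intro s hs hsb
    have hgsb : IntegrableOn g (Set.Icc s b) := hgb.mono_set (Set.Icc_subset_Icc hs le_rfl)
    have hcong : ∀ p ∈ Set.Ioc s b, g p * (T - ∫ t in Set.Ioc 0 p, g t)
        = g p * ((T - ∫ t in Set.Ioc 0 s, g t) - ∫ t in Set.Ioc s p, g t) := by
      intro p hp
      rw [hGadd s p hs hp.1.le hp.2]
      ring
    rw [setIntegral_congr_fun measurableSet_Ioc hcong, E_int s b _ g hgsb,
      hGadd s b hs hsb le_rfl]
    ring
  -- weight decomposition
  have hw'cont : ContinuousOn (fun s => α * (x - s) ^ (-α - 1)) (Set.Icc 0 b) := by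
    apply continuousOn_const.mul
    apply ContinuousOn.rpow_const (continuousOn_const.sub continuousOn_id)
    intro s hs
    exact Or.inl (ne_of_gt (by nlinarith [hs.2] : (0:ℝ) < x - s))
  have hw'int : IntegrableOn (fun s => α * (x - s) ^ (-α - 1)) (Set.Icc 0 b) :=
    hw'cont.integrableOn_Icc
  have step1 : ∫ p in Set.Ioc 0 b, (x - p) ^ (-α) * (g p * (T - ∫ t in Set.Ioc 0 p, g t))
      = ∫ p in Set.Ioc 0 b,
          (x ^ (-α) * (g p * (T - ∫ t in Set.Ioc 0 p, g t))
            + (∫ s in Set.Ioc 0 p, α * (x - s) ^ (-α - 1))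
              * (g p * (T - ∫ t in Set.Ioc 0 p, g t))) := by
    refine setIntegral_congr_fun measurableSet_Ioc fun p hp => ?_
    rw [weight_ftc α x p hα0 hp.1.le (lt_of_le_of_lt hp.2 hbx)]
    ring
  have hint1 : IntegrableOn (fun p => x ^ (-α) * (g p * (T - ∫ t in Set.Ioc 0 p, g t)))
      (Set.Ioc 0 b) := hgh_int.const_mul _
  have hint2 : IntegrableOn (fun p => (∫ s in Set.Ioc 0 p, α * (x - s) ^ (-α - 1))
      * (g p * (T - ∫ t in Set.Ioc 0 p, g t))) (Set.Ioc 0 b) :=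
    primitive_mul_integrable 0 b _ _ hw'int hgh_int
  rw [step1, integral_add hint1 hint2, integral_const_mul,
    swap_int 0 b _ _ (hw'int.mono_set Set.Ioc_subset_Icc_self) hgh_int,
    hE 0 le_rfl hb0.le]
  have hcong2 : ∫ s in Set.Ioc 0 b, (α * (x - s) ^ (-α - 1))
        * ∫ p in Set.Ioc s b, g p * (T - ∫ t in Set.Ioc 0 p, g t)
      = ∫ s in Set.Ioc 0 b, (α * (x - s) ^ (-α - 1))
        * ((T - ∫ t in Set.Ioc 0 s, g t) ^ 2 / 2
            - (T - ∫ t in Set.Ioc 0 b, g t) ^ 2 / 2) :=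
    setIntegral_congr_fun measurableSet_Ioc fun s hs => by rw [hE s hs.1.le hs.2]
  rw [hcong2]
  -- now pure inequalities
  have hφcont : ContinuousOn (fun s => (T - ∫ t in Set.Ioc 0 s, g t) ^ 2 / 2
      - (T - ∫ t in Set.Ioc 0 b, g t) ^ 2 / 2) (Set.Icc 0 b) :=
    (((continuousOn_const.sub hGcont).pow 2).div_const 2).sub continuousOn_const
  have hmono : ∫ s in Set.Ioc 0 b, (α * (x - s) ^ (-α - 1))
        * (-((T - ∫ t in Set.Ioc 0 b, g t) ^ 2 / 2))
      ≤ ∫ s in Set.Ioc 0 b, (α * (x - s) ^ (-α - 1))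
        * ((T - ∫ t in Set.Ioc 0 s, g t) ^ 2 / 2
            - (T - ∫ t in Set.Ioc 0 b, g t) ^ 2 / 2) := by
    refine setIntegral_mono_on
      ((hw'int.mono_set Set.Ioc_subset_Icc_self).mul_const _)
      ((hw'cont.mul hφcont).integrableOn_Icc.mono_set Set.Ioc_subset_Icc_self)
      measurableSet_Ioc fun s hs => ?_
    have hw'nn : 0 ≤ α * (x - s) ^ (-α - 1) :=
      mul_nonneg hα0.le (Real.rpow_nonneg (by nlinarith [hs.2] : (0:ℝ) ≤ x - s) _)
    refine mul_le_mul_of_nonneg_left ?_ hw'nn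
    nlinarith [sq_nonneg (T - ∫ t in Set.Ioc 0 s, g t)]
  have hIw' : ∫ s in Set.Ioc 0 b, (α * (x - s) ^ (-α - 1))
        * (-((T - ∫ t in Set.Ioc 0 b, g t) ^ 2 / 2))
      = ((x - b) ^ (-α) - x ^ (-α)) * (-((T - ∫ t in Set.Ioc 0 b, g t) ^ 2 / 2)) := by
    rw [integral_mul_const, weight_ftc α x b hα0 hb0.le hbx]
  rw [hIw'] at hmono
  have hxnn : (0:ℝ) ≤ x ^ (-α) := Real.rpow_nonneg hx0.le _
  nlinarith [sq_nonneg (T - ∫ t in Set.Ioc 0 (0:ℝ), g t), sq_nonneg (T - ∫ t in Set.Ioc 0 b, g t),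
    mul_nonneg hxnn (sq_nonneg (T - ∫ t in Set.Ioc 0 (0:ℝ), g t))]

lemma prim_add (x s p : ℝ) (g : ℝ → ℝ) (hg : IntegrableOn g (Set.Icc 0 x))
    (hs : 0 ≤ s) (hsp : s ≤ p) (hpx : p ≤ x) :
    (∫ t in Set.Ioc 0 p, g t) = (∫ t in Set.Ioc 0 s, g t) + ∫ t in Set.Ioc s p, g t := by
  rw [← Set.Ioc_union_Ioc_eq_Ioc hs hsp,
    setIntegral_union (Set.Ioc_disjoint_Ioc_of_le le_rfl) measurableSet_Ioc
      (hg.mono_set (Set.Ioc_subset_Icc_self.trans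
        (Set.Icc_subset_Icc le_rfl (hsp.trans hpx))))
      (hg.mono_set (Set.Ioc_subset_Icc_self.trans (Set.Icc_subset_Icc hs hpx)))]

lemma key_nonneg (α x : ℝ) (hα0 : 0 < α) (hα1 : α < 1) (hx : 0 < x) (g : ℝ → ℝ)
    (hg : IntegrableOn g (Set.Icc 0 x))
    (hK : IntegrableOn (fun p => (x - p) ^ (-α) * g p) (Set.Ioc 0 x)) :
    0 ≤ ∫ p in Set.Ioc 0 x, (x - p) ^ (-α)
        * (g p * ((∫ t in Set.Ioc 0 x, g t) - ∫ t in Set.Ioc 0 p, g t)) := by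
  set T : ℝ := ∫ t in Set.Ioc 0 x, g t with hT
  -- integrability of the full integrand ψ
  have hGcont : ContinuousOn (fun t => ∫ s in Set.Ioc 0 t, g s) (Set.Icc 0 x) :=
    intervalIntegral.continuousOn_primitive hg
  have hψ : IntegrableOn (fun p => (x - p) ^ (-α)
      * (g p * (T - ∫ t in Set.Ioc 0 p, g t))) (Set.Ioc 0 x) := by
    have h1 : IntegrableOn (fun p => (T - ∫ t in Set.Ioc 0 p, g t)
        * ((x - p) ^ (-α) * g p)) (Set.Ioc 0 x) := by
      refine Integrable.bdd_mul (c := |T| + ∫ p in Set.Icc 0 x, |g p|) hK ?_ ?_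
      · exact ((continuousOn_const.sub hGcont).mono
          Set.Ioc_subset_Icc_self).aestronglyMeasurable measurableSet_Ioc
      · filter_upwards [ae_restrict_mem measurableSet_Ioc] with t ht
        rw [Real.norm_eq_abs]
        have h2 : |∫ s in Set.Ioc 0 t, g s| ≤ ∫ p in Set.Icc 0 x, |g p| := by
          calc |∫ s in Set.Ioc 0 t, g s| ≤ ∫ s in Set.Ioc 0 t, |g s| := by
                simpa using norm_integral_le_integral_norm (μ := volume.restrict (Set.Ioc 0 t)) g
            _ ≤ ∫ p in Set.Icc 0 x, |g p| := by
                refine setIntegral_mono_set hg.norm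
                  (Eventually.of_forall fun p => abs_nonneg _)
                  (Eventually.of_forall (Set.Ioc_subset_Icc_self.trans
                    (Set.Icc_subset_Icc le_rfl ht.2)))
        calc |T - ∫ s in Set.Ioc 0 t, g s| ≤ |T| + |∫ s in Set.Ioc 0 t, g s| := abs_sub _ _
          _ ≤ |T| + ∫ p in Set.Icc 0 x, |g p| := by linarith
    exact h1.congr_fun (fun p _ => by ring) measurableSet_Ioc
  have hKabs : IntegrableOn (fun p => (x - p) ^ (-α) * |g p|) (Set.Ioc 0 x) := by
    refine IntegrableOn.congr_fun hK.norm (fun p hp => ?_) measurableSet_Ioc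
    rw [Real.norm_eq_abs, abs_mul,
      abs_of_nonneg (Real.rpow_nonneg (by linarith [hp.2] : (0:ℝ) ≤ x - p) _)]
  -- the approximating sequence
  set b : ℕ → ℝ := fun n => x - x / (n + 2) with hb
  have hb_mem : ∀ n, b n ∈ Set.Ioo 0 x := by
    intro n
    have hn2 : (2:ℝ) ≤ (n:ℝ) + 2 := by norm_num
    have h1 : x / ((n:ℝ) + 2) ≤ x / 2 := div_le_div_of_nonneg_left hx.le two_pos hn2
    have h2 : 0 < x / ((n:ℝ) + 2) := by positivity
    have hbn : b n = x - x / ((n:ℝ) + 2) := rfl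
    constructor
    · rw [hbn]; linarith
    · rw [hbn]; linarith
  have hb_tendsto : Tendsto b atTop (nhds x) := by
    have h1 : Tendsto (fun n : ℕ => x / ((n:ℝ) + 2)) atTop (nhds 0) :=
      Tendsto.div_atTop tendsto_const_nhds
        (tendsto_atTop_add_const_right _ 2 tendsto_natCast_atTop_atTop)
    simpa using tendsto_const_nhds.sub h1
  -- M n → J
  set ψ : ℝ → ℝ := fun p => (x - p) ^ (-α) * (g p * (T - ∫ t in Set.Ioc 0 p, g t)) with hψdef
  have hae_lt : ∀ᵐ p ∂volume.restrict (Set.Ioc 0 x), p ∈ Set.Ioo 0 x := by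
    rw [show volume.restrict (Set.Ioc 0 x) = volume.restrict (Set.Ioo 0 x) from
      (Measure.restrict_congr_set Ioo_ae_eq_Ioc).symm]
    exact ae_restrict_mem measurableSet_Ioo
  have hM_repr : ∀ n, (∫ p in Set.Ioc 0 (b n), ψ p)
      = ∫ p in Set.Ioc 0 x, (Set.Ioc 0 (b n)).indicator ψ p := by
    intro n
    rw [integral_indicator measurableSet_Ioc, Measure.restrict_restrict measurableSet_Ioc,
      Set.Ioc_inter_Ioc, min_eq_left (hb_mem n).2.le, max_self]
  have hM : Tendsto (fun n => ∫ p in Set.Ioc 0 (b n), ψ p) atTop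
      (nhds (∫ p in Set.Ioc 0 x, ψ p)) := by
    simp only [hM_repr]
    refine tendsto_integral_of_dominated_convergence (fun p => ‖ψ p‖)
      (fun n => hψ.aestronglyMeasurable.indicator measurableSet_Ioc) hψ.norm
      (fun n => Eventually.of_forall fun p => norm_indicator_le_norm_self ψ p) ?_
    filter_upwards [hae_lt] with p hp
    have : ∀ᶠ n in atTop, (Set.Ioc 0 (b n)).indicator ψ p = ψ p := by
      filter_upwards [hb_tendsto.eventually (eventually_mem_set.2 (Ioi_mem_nhds hp.2))] with n hn
      exact Set.indicator_of_mem (Set.mem_Ioc.2 ⟨hp.1, le_of_lt hn⟩) ψ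
    exact Filter.Tendsto.congr' (Filter.EventuallyEq.symm this) tendsto_const_nhds
  -- N n → 0
  have hN_repr : ∀ n, (∫ p in Set.Ioc (b n) x, (x - p) ^ (-α) * |g p|)
      = ∫ p in Set.Ioc 0 x, (Set.Ioc (b n) x).indicator (fun p => (x - p) ^ (-α) * |g p|) p := by
    intro n
    rw [integral_indicator measurableSet_Ioc, Measure.restrict_restrict measurableSet_Ioc,
      Set.Ioc_inter_Ioc, max_eq_left (hb_mem n).1.le, min_self]
  have hN : Tendsto (fun n => ∫ p in Set.Ioc (b n) x, (x - p) ^ (-α) * |g p|) atTop (nhds 0) := by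
    simp only [hN_repr]
    have h := tendsto_integral_of_dominated_convergence (μ := volume.restrict (Set.Ioc 0 x))
      (F := fun n => (Set.Ioc (b n) x).indicator fun p => (x - p) ^ (-α) * |g p|)
      (f := fun _ => (0:ℝ)) (fun p => ‖(x - p) ^ (-α) * |g p|‖)
      (fun n => hKabs.aestronglyMeasurable.indicator measurableSet_Ioc) hKabs.norm
      (fun n => Eventually.of_forall fun p => norm_indicator_le_norm_self _ p) ?_
    · simpa using h
    · filter_upwards [hae_lt] with p hp
      have h2 : ∀ᶠ n in atTop,
          (Set.Ioc (b n) x).indicator (fun p => (x - p) ^ (-α) * |g p|) p = 0 := by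
        filter_upwards [hb_tendsto.eventually (eventually_mem_set.2 (Ioi_mem_nhds hp.2))] with n hn
        exact Set.indicator_of_notMem (fun hmem => absurd hmem.1 (not_lt.2 hn.le)) _
      exact Filter.Tendsto.congr' (Filter.EventuallyEq.symm h2) tendsto_const_nhds
  -- lower bound per n
  have hlow : ∀ n, -(x ^ α * (∫ p in Set.Ioc (b n) x, (x - p) ^ (-α) * |g p|) ^ 2 / 2)
      ≤ ∫ p in Set.Ioc 0 (b n), ψ p := by
    intro n
    obtain ⟨hbn0, hbnx⟩ := hb_mem n
    have hxb : 0 < x - b n := by linarith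
    set In : ℝ := ∫ p in Set.Ioc (b n) x, (x - p) ^ (-α) * |g p| with hIn
    have hIn_nn : 0 ≤ In := by
      apply setIntegral_nonneg measurableSet_Ioc
      intro p hp
      exact mul_nonneg (Real.rpow_nonneg (by linarith [hp.2]) _) (abs_nonneg _)
    have hTb : T - (∫ t in Set.Ioc 0 (b n), g t) = ∫ t in Set.Ioc (b n) x, g t := by
      rw [hT, prim_add x (b n) x g hg hbn0.le hbnx.le le_rfl]; ring
    have habs : |T - ∫ t in Set.Ioc 0 (b n), g t| ≤ (x - b n) ^ α * In := by
      rw [hTb]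
      calc |∫ t in Set.Ioc (b n) x, g t| ≤ ∫ t in Set.Ioc (b n) x, |g t| := by
            simpa using norm_integral_le_integral_norm (μ := volume.restrict (Set.Ioc (b n) x)) g
        _ ≤ ∫ p in Set.Ioc (b n) x, (x - b n) ^ α * ((x - p) ^ (-α) * |g p|) := by
            rw [show volume.restrict (Set.Ioc (b n) x) = volume.restrict (Set.Ioo (b n) x) from
              (Measure.restrict_congr_set Ioo_ae_eq_Ioc).symm]
            refine setIntegral_mono_on ?_ ?_ measurableSet_Ioo ?_
            · exact (hg.mono_set (Set.Ioo_subset_Icc_self.trans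
                (Set.Icc_subset_Icc hbn0.le le_rfl))).norm
            · have hI := (hKabs.mono_set (Set.Ioc_subset_Ioc hbn0.le le_rfl)).const_mul
                ((x - b n) ^ α)
              exact IntegrableOn.mono_set hI Set.Ioo_subset_Ioc_self
            · intro p hp
              have hxp : 0 < x - p := by linarith [hp.2]
              have h1 : (x - b n) ^ (-α) ≤ (x - p) ^ (-α) :=
                Real.rpow_le_rpow_of_nonpos hxp (by linarith [hp.1]) (by linarith)
              have h2 : (1:ℝ) ≤ (x - b n) ^ α * (x - p) ^ (-α) := by
                have := mul_le_mul_of_nonneg_left h1 (Real.rpow_nonneg hxb.le α)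
                rwa [← Real.rpow_add hxb, add_neg_cancel, Real.rpow_zero] at this
              calc |g p| = 1 * |g p| := (one_mul _).symm
                _ ≤ ((x - b n) ^ α * (x - p) ^ (-α)) * |g p| :=
                    mul_le_mul_of_nonneg_right h2 (abs_nonneg _)
                _ = (x - b n) ^ α * ((x - p) ^ (-α) * |g p|) := by ring
        _ = (x - b n) ^ α * In := by rw [integral_const_mul]
    have hclaim := claim_lb α x (b n) T hα0 hbn0 hbnx g hg
    refine le_trans ?_ hclaim
    have hsq : (T - ∫ t in Set.Ioc 0 (b n), g t) ^ 2 ≤ ((x - b n) ^ α * In) ^ 2 := by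
      rw [← sq_abs]
      exact pow_le_pow_left₀ (abs_nonneg _) habs 2
    have hrw : (x - b n) ^ (-α) * ((x - b n) ^ α * In) ^ 2
        = (x - b n) ^ α * In ^ 2 := by
      rw [mul_pow, ← Real.rpow_natCast ((x - b n) ^ α) 2, ← Real.rpow_mul hxb.le]
      rw [show (x - b n) ^ (-α) * ((x - b n) ^ (α * ((2:ℕ):ℝ)) * In ^ 2)
          = ((x - b n) ^ (-α) * (x - b n) ^ (α * ((2:ℕ):ℝ))) * In ^ 2 from by ring]
      rw [← Real.rpow_add hxb]
      congr 1
      congr 1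
      push_cast
      ring
    have hle2 : (x - b n) ^ (-α) * ((T - ∫ t in Set.Ioc 0 (b n), g t) ^ 2 / 2)
        ≤ x ^ α * In ^ 2 / 2 := by
      have h4 : (x - b n) ^ (-α) * (((x - b n) ^ α * In) ^ 2 / 2)
          = (x - b n) ^ α * In ^ 2 / 2 := by
        rw [show (x - b n) ^ (-α) * (((x - b n) ^ α * In) ^ 2 / 2)
            = ((x - b n) ^ (-α) * ((x - b n) ^ α * In) ^ 2) / 2 from by ring, hrw]
      have h3 : (x - b n) ^ (-α) * ((T - ∫ t in Set.Ioc 0 (b n), g t) ^ 2 / 2)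
          ≤ (x - b n) ^ (-α) * (((x - b n) ^ α * In) ^ 2 / 2) := by
        apply mul_le_mul_of_nonneg_left _ (Real.rpow_nonneg hxb.le _)
        linarith
      rw [h4] at h3
      have h5 : (x - b n) ^ α ≤ x ^ α :=
        Real.rpow_le_rpow hxb.le (by linarith) hα0.le
      have h6 : (x - b n) ^ α * In ^ 2 / 2 ≤ x ^ α * In ^ 2 / 2 := by
        have := mul_le_mul_of_nonneg_right h5 (sq_nonneg In)
        linarith
      linarith
    linarith
  -- conclude
  have hlim : Tendsto (fun n => -(x ^ α
      * (∫ p in Set.Ioc (b n) x, (x - p) ^ (-α) * |g p|) ^ 2 / 2)) atTop (nhds 0) := by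
    have h1 := (((hN.pow 2).const_mul (x ^ α)).div_const 2).neg
    simpa using h1
  exact le_of_tendsto_of_tendsto' hlim hM hlow

lemma ae_integrable (α L : ℝ) (hα0 : 0 < α) (hα1 : α < 1) (hL : 0 < L) (g : ℝ → ℝ)
    (hg : IntegrableOn g (Set.Ioc 0 L)) :
    ∀ᵐ x ∂(volume.restrict (Set.Ioo 0 L)),
      IntegrableOn (fun p => (x - p) ^ (-α) * g p) (Set.Ioc 0 x) := by
  set μ := volume.restrict (Set.Ioo 0 L) with hμ
  have hgm : AEStronglyMeasurable g μ :=
    hg.aestronglyMeasurable.mono_measure (Measure.restrict_mono Set.Ioo_subset_Ioc_self le_rfl)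
  have hgIoo : IntegrableOn g (Set.Ioo 0 L) := hg.mono_set Set.Ioo_subset_Ioc_self
  set Φ : ℝ × ℝ → ℝ := fun z => if z.2 < z.1 then (z.1 - z.2) ^ (-α) * g z.2 else 0 with hΦ
  have hΦm : AEStronglyMeasurable Φ (μ.prod μ) := by
    have h1 : AEStronglyMeasurable (fun z : ℝ × ℝ => (z.1 - z.2) ^ (-α) * g z.2) (μ.prod μ) := by
      refine AEStronglyMeasurable.mul ?_ hgm.comp_snd
      exact (Measurable.aestronglyMeasurable (by fun_prop :
        Measurable (fun z : ℝ × ℝ => (z.1 - z.2) ^ (-α))))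
    have h2 : Φ = {z : ℝ × ℝ | z.2 < z.1}.indicator
        (fun z : ℝ × ℝ => (z.1 - z.2) ^ (-α) * g z.2) := by
      ext z; by_cases h : z.2 < z.1 <;> simp [hΦ, h]
    rw [h2]
    exact h1.indicator (measurableSet_lt measurable_snd measurable_fst)
  -- slice integrability in x for fixed p
  have key1 : ∀ᵐ p ∂μ, Integrable (fun x => Φ (x, p)) μ := by
    filter_upwards [ae_restrict_mem measurableSet_Ioo] with p hp
    have hfun : (fun x => Φ (x, p))
        = (Set.Ioi p).indicator (fun x => (x - p) ^ (-α) * g p) := by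
      ext x; by_cases h : p < x <;> simp [hΦ, h]
    rw [hfun, hμ, integrable_indicator_iff measurableSet_Ioi]
    have hres : (volume.restrict (Set.Ioo 0 L)).restrict (Set.Ioi p)
        = volume.restrict (Set.Ioo p L) := by
      rw [Measure.restrict_restrict measurableSet_Ioi]
      congr 1
      ext y
      constructor
      · rintro ⟨h1, h2, h3⟩; exact ⟨h1, h3⟩
      · rintro ⟨h1, h2⟩; exact ⟨h1, hp.1.trans h1, h2⟩
    show Integrable _ ((volume.restrict (Set.Ioo 0 L)).restrict (Set.Ioi p))
    rw [hres]
    have hrpow : IntervalIntegrable (fun x => (x - p) ^ (-α)) volume p L := by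
      have h1 : IntervalIntegrable (fun y : ℝ => y ^ (-α)) volume 0 (L - p) :=
        intervalIntegral.intervalIntegrable_rpow' (by linarith)
      have h2 := h1.comp_sub_right p
      simpa using h2
    exact ((intervalIntegrable_iff_integrableOn_Ioo_of_le hp.2.le).1 hrpow).mul_const _
  -- integrability of the norm integral
  have key2 : Integrable (fun p => ∫ x, ‖Φ (x, p)‖ ∂μ) μ := by
    refine Integrable.mono' ((hgIoo.norm.mul_const (L ^ (1 - α) / (1 - α))) : Integrable _ μ)
      ?_ ?_
    · have := (hΦm.norm.prod_swap).integral_prod_right'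
      refine this.congr (Eventually.of_forall fun p => ?_)
      simp
    · filter_upwards [ae_restrict_mem measurableSet_Ioo] with p hp
      have hfun : (fun x => ‖Φ (x, p)‖)
          = (Set.Ioi p).indicator (fun x => (x - p) ^ (-α) * |g p|) := by
        ext x
        by_cases h : p < x
        · simp only [hΦ, h, if_true, Set.indicator_of_mem (Set.mem_Ioi.2 h)]
          rw [Real.norm_eq_abs, abs_mul,
            abs_of_nonneg (Real.rpow_nonneg (by linarith : (0:ℝ) ≤ x - p) _)]
        · simp [hΦ, h]
      have hres : (volume.restrict (Set.Ioo 0 L)).restrict (Set.Ioi p)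
          = volume.restrict (Set.Ioo p L) := by
        rw [Measure.restrict_restrict measurableSet_Ioi]
        congr 1
        ext y
        constructor
        · rintro ⟨h1, h2, h3⟩; exact ⟨h1, h3⟩
        · rintro ⟨h1, h2⟩; exact ⟨h1, hp.1.trans h1, h2⟩
      have hI : (∫ x, ‖Φ (x, p)‖ ∂μ) = |g p| * ∫ x in Set.Ioo p L, (x - p) ^ (-α) := by
        rw [hfun, hμ, integral_indicator measurableSet_Ioi]
        show (∫ x, _ ∂(volume.restrict (Set.Ioo 0 L)).restrict (Set.Ioi p)) = _
        rw [hres, integral_mul_const, mul_comm]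
      have hval : ∫ x in Set.Ioo p L, (x - p) ^ (-α) = (L - p) ^ (1 - α) / (1 - α) := by
        rw [show volume.restrict (Set.Ioo p L) = volume.restrict (Set.Ioc p L) from
          Measure.restrict_congr_set Ioo_ae_eq_Ioc,
          ← intervalIntegral.integral_of_le hp.2.le,
          intervalIntegral.integral_comp_sub_right (fun y => y ^ (-α)) p]
        simp only [sub_self]
        rw [integral_rpow (Or.inl (by linarith))]
        rw [Real.zero_rpow (by intro h; apply hα1.ne'; linarith [h] : -α + 1 ≠ 0)]
        norm_num
        ring_nf
      rw [hI, hval, Real.norm_eq_abs]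
      have hnn1 : 0 ≤ (L - p) ^ (1 - α) / (1 - α) :=
        div_nonneg (Real.rpow_nonneg (by linarith [hp.2]) _) (by linarith)
      rw [abs_of_nonneg (mul_nonneg (abs_nonneg _) hnn1)]
      apply mul_le_mul_of_nonneg_left _ (abs_nonneg _)
      gcongr <;> linarith [hp.1, hp.2]
  have hΦint : Integrable Φ (μ.prod μ) := (integrable_prod_iff' hΦm).2 ⟨key1, key2⟩
  filter_upwards [hΦint.prod_right_ae, ae_restrict_mem measurableSet_Ioo] with x hx hxm
  have h1 : IntegrableOn (fun p => Φ (x, p)) (Set.Ioo 0 x) μ := hx.integrableOn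
  have hres2 : μ.restrict (Set.Ioo 0 x) = volume.restrict (Set.Ioo 0 x) := by
    rw [hμ, Measure.restrict_restrict measurableSet_Ioo,
      Set.inter_eq_self_of_subset_left (Set.Ioo_subset_Ioo le_rfl hxm.2.le)]
  rw [IntegrableOn, hres2] at h1
  have h2 : IntegrableOn (fun p => (x - p) ^ (-α) * g p) (Set.Ioo 0 x) := by
    refine h1.congr ?_
    filter_upwards [ae_restrict_mem measurableSet_Ioo] with p hp
    simp [hΦ, hp.2]
  rwa [IntegrableOn, show volume.restrict (Set.Ioc 0 x) = volume.restrict (Set.Ioo 0 x) from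
    (Measure.restrict_congr_set Ioo_ae_eq_Ioc).symm]

/-- the pointwise Alikhanov-type inequality
(D^a f)(x) f(x) >= (1/2)(D^a f^2)(x) a.e., i.e.
(I^{1-a} f')(x) f(x) >= (I^{1-a}(f f'))(x) a.e. on (0, L), for f absolutely
continuous on [0, L] with integrable a.e. derivative f'. -/
theorem statement_14 (α L : ℝ) (hα : α ∈ Set.Ioo (0:ℝ) 1) (hL : 0 < L)
    (f f' : ℝ → ℝ) (hf' : IntervalIntegrable f' MeasureTheory.volume 0 L)
    (hf : ∀ x ∈ Set.Icc (0:ℝ) L, f x = f 0 + ∫ t in (0:ℝ)..x, f' t) :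
    ∀ᵐ x ∂(MeasureTheory.volume.restrict (Set.Ioo (0:ℝ) L)),
      fracIntR (1 - α) (fun s => f s * f' s) x ≤ fracIntR (1 - α) f' x * f x := by
  obtain ⟨hα0, hα1⟩ := hα
  have hf'L : IntegrableOn f' (Set.Ioc 0 L) := hf'.1
  filter_upwards [ae_integrable α L hα0 hα1 hL f' hf'L, ae_restrict_mem measurableSet_Ioo]
    with x hK hx
  obtain ⟨hx0, hxL⟩ := hx
  have h1α : (1 - α) ≠ 0 := ne_of_gt (by linarith)
  have hΓ : 0 < Real.Gamma (1 - α) := Real.Gamma_pos_of_pos (by linarith)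
  unfold fracIntR
  rw [if_neg h1α, if_neg h1α,
    show (Real.Gamma (1 - α))⁻¹ * (∫ p in (0:ℝ)..x, (x - p) ^ (1 - α - 1) * f' p) * f x
      = (Real.Gamma (1 - α))⁻¹ * ((∫ p in (0:ℝ)..x, (x - p) ^ (1 - α - 1) * f' p) * f x)
      from by ring]
  apply mul_le_mul_of_nonneg_left _ (inv_nonneg.2 hΓ.le)
  rw [intervalIntegral.integral_of_le hx0.le, intervalIntegral.integral_of_le hx0.le,
    show (1:ℝ) - α - 1 = -α from by ring]
  have hg : IntegrableOn f' (Set.Icc 0 x) := by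
    rw [integrableOn_Icc_iff_integrableOn_Ioc]
    exact hf'L.mono_set (Set.Ioc_subset_Ioc le_rfl hxL.le)
  have hfeq : ∀ p ∈ Set.Icc (0:ℝ) L, f p = f 0 + ∫ t in Set.Ioc 0 p, f' t := by
    intro p hp
    rw [hf p hp, intervalIntegral.integral_of_le hp.1]
  have hfx : f x = f 0 + ∫ t in Set.Ioc 0 x, f' t := hfeq x ⟨hx0.le, hxL.le⟩
  have hkey := key_nonneg α x hα0 hα1 hx0 f' hg hK
  have hint1 : IntegrableOn (fun p => (x - p) ^ (-α) * f' p * f x) (Set.Ioc 0 x) :=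
    hK.mul_const _
  have hint2 : IntegrableOn (fun p => (x - p) ^ (-α) * (f p * f' p)) (Set.Ioc 0 x) := by
    have hGcont : ContinuousOn (fun t => f 0 + ∫ s in Set.Ioc 0 t, f' s) (Set.Icc 0 x) :=
      continuousOn_const.add (intervalIntegral.continuousOn_primitive hg)
    have h1 : IntegrableOn (fun p => (f 0 + ∫ t in Set.Ioc 0 p, f' t)
        * ((x - p) ^ (-α) * f' p)) (Set.Ioc 0 x) := by
      refine Integrable.bdd_mul (c := |f 0| + ∫ p in Set.Icc 0 x, |f' p|) hK ?_ ?_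
      · exact (hGcont.mono Set.Ioc_subset_Icc_self).aestronglyMeasurable measurableSet_Ioc
      · filter_upwards [ae_restrict_mem measurableSet_Ioc] with t ht
        rw [Real.norm_eq_abs]
        have h2 : |∫ s in Set.Ioc 0 t, f' s| ≤ ∫ p in Set.Icc 0 x, |f' p| := by
          calc |∫ s in Set.Ioc 0 t, f' s| ≤ ∫ s in Set.Ioc 0 t, |f' s| := by
                simpa using norm_integral_le_integral_norm (μ := volume.restrict (Set.Ioc 0 t)) f'
            _ ≤ ∫ p in Set.Icc 0 x, |f' p| := by
                refine setIntegral_mono_set hg.norm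
                  (Eventually.of_forall fun p => abs_nonneg _)
                  (Eventually.of_forall (Set.Ioc_subset_Icc_self.trans
                    (Set.Icc_subset_Icc le_rfl ht.2)))
        calc |f 0 + ∫ s in Set.Ioc 0 t, f' s| ≤ |f 0| + |∫ s in Set.Ioc 0 t, f' s| :=
              abs_add_le _ _
          _ ≤ |f 0| + ∫ p in Set.Icc 0 x, |f' p| := by linarith
    refine h1.congr_fun (fun p hp => ?_) measurableSet_Ioc
    beta_reduce
    rw [← hfeq p ⟨hp.1.le, hp.2.trans hxL.le⟩]
    ring
  have hsub : (∫ p in Set.Ioc 0 x, (x - p) ^ (-α) * f' p) * f x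
      - (∫ p in Set.Ioc 0 x, (x - p) ^ (-α) * (f p * f' p))
      = ∫ p in Set.Ioc 0 x, (x - p) ^ (-α)
          * (f' p * ((∫ t in Set.Ioc 0 x, f' t) - ∫ t in Set.Ioc 0 p, f' t)) := by
    rw [← integral_mul_const, ← integral_sub hint1 hint2]
    refine setIntegral_congr_fun measurableSet_Ioc fun p hp => ?_
    rw [hfeq p ⟨hp.1.le, hp.2.trans hxL.le⟩, hfx]
    ring
  linarith [hkey, hsub]
end
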